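/- arXiv:1209.0440 — 5 statements merged into one kernel-verified Lean document; each statement's English description precedes it below -/
import Mathlib

section
/- Let ℓ : [0,T] → ℝ be continuous, nondecreasing with ℓ(0) = 0, let g : ℝⁿ → ℝᵖ and α : ℝⁿ → ℝ be continuous with α ≥ α₀ > 0, let x : [0,T] → ℝⁿ be continuous, and let Y(t) = exp(∫₀ᵗ α(x(u)) dℓ(u)). Suppose s : [0,T] → ℝᵖ is continuous, of bounded variation, and satisfies the Stieltjes equation s(t) = s(0) + ∫₀ᵗ (g(x(u)) − α(x(u)) s(u)) dℓ(u). Then s(t) = Y(t)⁻¹ s(0) + Y(t)⁻¹ ∫₀ᵗ (g(x(u))/α(x(u))) dY(u) for all t ∈ [0,T]. -/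
open MeasureTheory

open Set


lemma atom_zero (T : ℝ) (ℓ : ℝ → ℝ) (hℓc : ContinuousOn ℓ (Set.Icc 0 T))
    (μ : Measure ℝ)
    (hμ : ∀ a b : ℝ, 0 ≤ a → a ≤ b → b ≤ T → μ (Set.Ioc a b) = ENNReal.ofReal (ℓ b - ℓ a))
    {v : ℝ} (hv : v ∈ Set.Ioc (0:ℝ) T) : μ {v} = 0 := by
  obtain ⟨hv0, hvT⟩ := hv
  set a : ℕ → ℝ := fun n => v - v * (1 / ((n:ℝ) + 1)) with ha
  have hpos : ∀ n : ℕ, 0 < v * (1 / ((n:ℝ) + 1)) := by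
    intro n; positivity
  have hmem : ∀ n, a n ∈ Set.Icc (0:ℝ) T := by
    intro n
    constructor
    · have : v * (1 / ((n:ℝ) + 1)) ≤ v * 1 := by
        apply mul_le_mul_of_nonneg_left _ hv0.le
        rw [div_le_one] <;> linarith [Nat.cast_nonneg (α := ℝ) n]
      simp only [ha]; linarith
    · have := (hpos n); simp only [ha]; linarith
  have hlt : ∀ n, a n < v := fun n => by have := hpos n; simp only [ha]; linarith
  have hta : Filter.Tendsto a Filter.atTop (nhds v) := by
    have h1 : Filter.Tendsto (fun n : ℕ => 1 / ((n:ℝ) + 1)) Filter.atTop (nhds 0) :=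
      tendsto_one_div_add_atTop_nhds_zero_nat
    have := ((h1.const_mul v).const_sub v)
    simpa [ha, one_div] using this
  have htl : Filter.Tendsto (fun n => ℓ (a n)) Filter.atTop (nhds (ℓ v)) := by
    have hcw : ContinuousWithinAt ℓ (Set.Icc 0 T) v := hℓc v ⟨hv0.le, hvT⟩
    exact hcw.tendsto.comp (tendsto_nhdsWithin_of_tendsto_nhds_of_eventually_within a hta
      (Filter.Eventually.of_forall hmem))
  have hto : Filter.Tendsto (fun n => ENNReal.ofReal (ℓ v - ℓ (a n))) Filter.atTop (nhds 0) := by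
    have : Filter.Tendsto (fun n => ℓ v - ℓ (a n)) Filter.atTop (nhds 0) := by
      simpa using (htl.const_sub (ℓ v))
    simpa using (ENNReal.tendsto_ofReal this)
  have hle : ∀ n, μ {v} ≤ ENNReal.ofReal (ℓ v - ℓ (a n)) := by
    intro n
    rw [← hμ (a n) v (hmem n).1 (hlt n).le hvT]
    exact measure_mono (by simp [Set.singleton_subset_iff, hlt n])
  have := ge_of_tendsto' hto hle
  simpa using this


lemma chain_rule (μ : Measure ℝ) (t : ℝ) (ht : 0 ≤ t)
    (a A : ℝ → ℝ) (hac : Continuous a) (ha0 : ∀ u, 0 ≤ a u)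
    (hAc : Continuous A) (hAm : Monotone A) (hA0 : A 0 = 0)
    (hfin : μ (Set.Ioc 0 t) ≠ ⊤)
    (hint : ∀ u ∈ Set.Icc 0 t, IntegrableOn a (Set.Ioc 0 u) μ)
    (hA : ∀ u ∈ Set.Icc 0 t, A u = ∫ v in Set.Ioc 0 u, a v ∂μ) :
    ∫ u in Set.Ioc 0 t, a u * Real.exp (A u) ∂μ = Real.exp (A t) - 1 := by
  have hAt0 : 0 ≤ A t := hA0 ▸ hAm ht
  set m : Measure ℝ := μ.restrict (Set.Ioc 0 t) with hm
  have hmfin : IsFiniteMeasure m := by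
    constructor
    rw [hm, Measure.restrict_apply_univ]
    exact hfin.lt_top
  set w : ℝ → NNReal := fun u => Real.toNNReal (a u) with hw
  have hwm : Measurable w := (continuous_real_toNNReal.comp hac).measurable
  set lam : Measure ℝ := m.withDensity (fun u => (w u : ENNReal)) with hlam
  -- lam of measurable set B
  have lamSet : ∀ B : Set ℝ, MeasurableSet B →
      lam B = ∫⁻ v in B ∩ Set.Ioc 0 t, (w v : ENNReal) ∂μ := by
    intro B hB
    rw [hlam, withDensity_apply _ hB, hm, Measure.restrict_restrict hB]
  have lamIoc : ∀ u ∈ Set.Icc (0:ℝ) t, ∫⁻ v in Set.Ioc 0 u, (w v : ENNReal) ∂μ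
      = ENNReal.ofReal (A u) := by
    intro u hu
    have hi := hint u hu
    have : ∀ v, (w v : ENNReal) = ENNReal.ofReal (a v) := fun v => rfl
    simp_rw [this]
    rw [← ofReal_integral_eq_lintegral_ofReal hi
      (Filter.Eventually.of_forall (fun v => ha0 v)), ← hA u hu]
  have lamIic : ∀ u ∈ Set.Icc (0:ℝ) t, lam (Set.Iic u) = ENNReal.ofReal (A u) := by
    intro u hu
    rw [lamSet _ measurableSet_Iic]
    have : Set.Iic u ∩ Set.Ioc 0 t = Set.Ioc 0 u := by
      rw [Set.inter_comm, Set.Ioc_inter_Iic, min_eq_right hu.2]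
    rw [this, lamIoc u hu]
  have lamuniv : lam Set.univ = ENNReal.ofReal (A t) := by
    rw [lamSet _ MeasurableSet.univ, Set.univ_inter, lamIoc t ⟨ht, le_refl t⟩]
  have hlamfin : IsFiniteMeasure lam := by
    constructor; rw [lamuniv]; exact ENNReal.ofReal_lt_top
  -- sublevel sets
  have Slevel : ∀ d : ℝ, lam {u | A u ≤ d} = ENNReal.ofReal (min d (A t)) := by
    intro d
    have hmeas : MeasurableSet {u | A u ≤ d} := measurableSet_le hAc.measurable measurable_const
    rcases lt_or_ge d 0 with hd | hd
    · rw [lamSet _ hmeas]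
      have : {u | A u ≤ d} ∩ Set.Ioc 0 t = ∅ := by
        ext u; simp only [Set.mem_inter_iff, Set.mem_setOf_eq, Set.mem_Ioc, Set.mem_empty_iff_false,
          iff_false]
        rintro ⟨h1, h2, h3⟩
        have : (0:ℝ) ≤ A u := hA0 ▸ hAm h2.le
        linarith
      rw [this]
      simp [ENNReal.ofReal_eq_zero.2 (by simp [min_le_iff]; left; linarith : min d (A t) ≤ 0)]
    rcases le_or_gt (A t) d with hdt | hdt
    · have h1 : lam {u | A u ≤ d} ≤ ENNReal.ofReal (A t) := lamuniv ▸ measure_mono (Set.subset_univ _)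
      have h2 : ENNReal.ofReal (A t) ≤ lam {u | A u ≤ d} := by
        rw [← lamIic t ⟨ht, le_refl t⟩]
        exact measure_mono (fun u hu => le_trans (hAm hu) hdt)
      rw [le_antisymm h1 h2, min_eq_right hdt]
    · -- 0 ≤ d < A t
      set K := Set.Icc 0 t ∩ A ⁻¹' (Set.Iic d) with hK
      have hKne : K.Nonempty := ⟨0, ⟨le_refl 0, ht⟩, by simp [hA0, hd]⟩
      have hKbdd : BddAbove K := ⟨t, fun u hu => hu.1.2⟩
      have hKcl : IsClosed K := isClosed_Icc.inter (isClosed_Iic.preimage hAc)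
      set τ := sSup K with hτ
      have hτK : τ ∈ K := hKcl.csSup_mem hKne hKbdd
      have hτt : τ ≤ t := hτK.1.2
      have hτ0 : 0 ≤ τ := hτK.1.1
      have hAτd : A τ ≤ d := hτK.2
      have hAτ : A τ = d := by
        by_contra hne
        have hlt : A τ < d := lt_of_le_of_ne hAτd hne
        have hτlt : τ < t := by
          rcases lt_or_eq_of_le hτt with h | h
          · exact h
          · exfalso; rw [h] at hlt; linarith
        have hopen : IsOpen (A ⁻¹' Set.Iio d) := isOpen_Iio.preimage hAc
        rcases Metric.isOpen_iff.1 hopen τ hlt with ⟨ε, hε, hball⟩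
        set u := min t (τ + ε/2) with hu
        have huτ : τ < u := lt_min hτlt (by linarith)
        have hud : A u < d := by
          apply hball
          rw [Metric.mem_ball, Real.dist_eq, abs_lt]
          constructor
          · have : τ ≤ u := huτ.le
            linarith
          · have : u ≤ τ + ε/2 := min_le_right _ _
            linarith
        have : u ∈ K := ⟨⟨le_trans hτ0 huτ.le, min_le_left _ _⟩, hud.le⟩
        have : u ≤ τ := le_csSup hKbdd this
        linarith
      have hset : {u | A u ≤ d} ∩ Set.Ioc 0 t = Set.Ioc 0 τ := by
        ext u
        simp only [Set.mem_inter_iff, Set.mem_setOf_eq, Set.mem_Ioc]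
        constructor
        · rintro ⟨h1, h2, h3⟩
          exact ⟨h2, le_csSup hKbdd ⟨⟨h2.le, h3⟩, h1⟩⟩
        · rintro ⟨h1, h2⟩
          exact ⟨hAτ ▸ hAm h2, h1, le_trans h2 hτt⟩
      rw [lamSet _ (measurableSet_le hAc.measurable measurable_const), hset,
        lamIoc τ ⟨hτ0, hτt⟩, hAτ, min_eq_left hdt.le]
  -- the pushforward is Lebesgue on (0, A t]
  have hmap : Measure.map A lam = volume.restrict (Set.Ioc 0 (A t)) := by
    have : IsFiniteMeasure (Measure.map A lam) := by
      constructor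
      rw [Measure.map_apply hAc.measurable MeasurableSet.univ]
      simp only [Set.preimage_univ]
      rw [lamuniv]; exact ENNReal.ofReal_lt_top
    apply Measure.ext_of_Ioc_finite
    · rw [Measure.map_apply hAc.measurable MeasurableSet.univ]
      simp only [Set.preimage_univ]
      rw [lamuniv, Measure.restrict_apply_univ, Real.volume_Ioc, sub_zero]
    · intro c d hcd
      rw [Measure.map_apply hAc.measurable measurableSet_Ioc]
      have hpre : A ⁻¹' Set.Ioc c d = {u | A u ≤ d} \ {u | A u ≤ c} := by
        ext u; simp only [Set.mem_preimage, Set.mem_Ioc, Set.mem_diff, Set.mem_setOf_eq,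
          not_le]
        tauto
      have hsub : {u | A u ≤ c} ⊆ {u | A u ≤ d} := fun u hu => le_trans hu hcd.le
      rw [hpre, measure_diff hsub
        (measurableSet_le hAc.measurable measurable_const).nullMeasurableSet
        (by rw [Slevel]; exact ENNReal.ofReal_ne_top),
        Slevel, Slevel,
        Measure.restrict_apply measurableSet_Ioc, Set.Ioc_inter_Ioc, Real.volume_Ioc,
        ENNReal.ofReal_sub _ (le_sup_right : (0:ℝ) ≤ c ⊔ 0)]
      rcases le_or_gt c (A t) with hcA | hcA
      · congr 1
        rcases le_or_gt c 0 with hc0 | hc0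
        · rw [min_eq_left (le_trans hc0 hAt0), sup_eq_right.2 hc0, ENNReal.ofReal_zero,
            ENNReal.ofReal_eq_zero]
          exact hc0
        · rw [min_eq_left hcA, sup_eq_left.2 hc0.le]
      · rw [tsub_eq_zero_of_le, tsub_eq_zero_of_le]
        · exact ENNReal.ofReal_le_ofReal (le_trans (min_le_right _ _)
            (le_trans hcA.le le_sup_left))
        · exact ENNReal.ofReal_le_ofReal (by rw [min_eq_right hcA.le]; exact min_le_right _ _)
  -- conclude
  have h1 : ∫ y in Set.Ioc 0 (A t), Real.exp y = Real.exp (A t) - 1 := by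
    rw [← intervalIntegral.integral_of_le hAt0, integral_exp, Real.exp_zero]
  have h2 : ∫ y, Real.exp y ∂(Measure.map A lam) = ∫ u, Real.exp (A u) ∂lam :=
    integral_map hAc.aemeasurable Real.continuous_exp.aestronglyMeasurable
  have h3 : ∫ u, Real.exp (A u) ∂lam = ∫ u, a u * Real.exp (A u) ∂m := by
    rw [hlam, integral_withDensity_eq_integral_smul hwm]
    congr 1
    ext u
    simp [hw, NNReal.smul_def, Real.coe_toNNReal _ (ha0 u)]
  rw [← h3, ← h2, hmap, h1]


lemma prod_rule {E : Type*} [NormedAddCommGroup E] [NormedSpace ℝ E] [CompleteSpace E]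
    (m : Measure ℝ) [IsFiniteMeasure m] (b : ℝ → ℝ) (f : ℝ → E)
    (hbi : Integrable b m) (hfi : Integrable f m) :
    (∫ u, b u ∂m) • (∫ v, f v ∂m)
      = ∫ u, b u • (∫ v in Set.Iic u, f v ∂m) ∂m
        + ∫ v, (∫ u in Set.Iio v, b u ∂m) • f v ∂m := by
  have hprod : Integrable (fun z : ℝ × ℝ => b z.1 • f z.2) (m.prod m) :=
    hbi.smul_prod hfi
  set S : Set (ℝ × ℝ) := {z : ℝ × ℝ | z.2 ≤ z.1} with hS
  have hSm : MeasurableSet S := measurableSet_le measurable_snd measurable_fst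
  have htotal : ∫ z : ℝ × ℝ, b z.1 • f z.2 ∂(m.prod m) = (∫ u, b u ∂m) • (∫ v, f v ∂m) :=
    integral_prod_smul b f
  have hsplit : (∫ z in S, b z.1 • f z.2 ∂(m.prod m))
      + (∫ z in Sᶜ, b z.1 • f z.2 ∂(m.prod m))
      = ∫ z : ℝ × ℝ, b z.1 • f z.2 ∂(m.prod m) :=
    integral_add_compl hSm hprod
  have h1 : ∫ z in S, b z.1 • f z.2 ∂(m.prod m)
      = ∫ u, b u • (∫ v in Set.Iic u, f v ∂m) ∂m := by
    rw [← integral_indicator hSm, integral_prod _ (hprod.indicator hSm)]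
    congr 1
    ext u
    have : (fun v => S.indicator (fun z : ℝ × ℝ => b z.1 • f z.2) (u, v))
        = (Set.Iic u).indicator (fun v => b u • f v) := by
      ext v
      simp only [Set.indicator_apply, hS, Set.mem_setOf_eq, Set.mem_Iic]
    rw [this, integral_indicator measurableSet_Iic, integral_smul]
  have h2 : ∫ z in Sᶜ, b z.1 • f z.2 ∂(m.prod m)
      = ∫ v, (∫ u in Set.Iio v, b u ∂m) • f v ∂m := by
    rw [← integral_indicator hSm.compl, integral_prod_symm _ (hprod.indicator hSm.compl)]
    congr 1
    ext v
    have : (fun u => Sᶜ.indicator (fun z : ℝ × ℝ => b z.1 • f z.2) (u, v))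
        = (Set.Iio v).indicator (fun u => b u • f v) := by
      ext u
      simp only [Set.indicator_apply, hS, Set.mem_compl_iff, Set.mem_setOf_eq, Set.mem_Iio,
        not_le]
    rw [this, integral_indicator measurableSet_Iio, integral_smul_const]
  rw [← htotal, ← hsplit, h1, h2]

/-- Pathwise representation formula for the spin process (Lemma 2.3): if `s` is a
continuous BV solution of `s t = s 0 + ∫₀ᵗ (g(x u) − α(x u) s u) dℓ(u)` and
`Y t = exp (∫₀ᵗ α(x u) dℓ(u))`, then
`s t = Y t⁻¹ • s 0 + Y t⁻¹ • ∫₀ᵗ (g(x u)/α(x u)) dY(u)`.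
Here `μ` and `ν` are the Lebesgue–Stieltjes measures of `ℓ` and `Y`. -/
theorem spin_representation (n p : ℕ) (T : ℝ) (hT : 0 < T)
    (ℓ : ℝ → ℝ) (hℓc : ContinuousOn ℓ (Set.Icc 0 T)) (hℓm : MonotoneOn ℓ (Set.Icc 0 T))
    (hℓ0 : ℓ 0 = 0)
    (g : EuclideanSpace ℝ (Fin n) → EuclideanSpace ℝ (Fin p)) (hgc : Continuous g)
    (α : EuclideanSpace ℝ (Fin n) → ℝ) (hαc : Continuous α)
    (α₀ : ℝ) (hα₀ : 0 < α₀) (hα : ∀ y, α₀ ≤ α y)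
    (x : ℝ → EuclideanSpace ℝ (Fin n)) (hx : ContinuousOn x (Set.Icc 0 T))
    (μ : Measure ℝ)
    (hμ : ∀ a b : ℝ, 0 ≤ a → a ≤ b → b ≤ T →
      μ (Set.Ioc a b) = ENNReal.ofReal (ℓ b - ℓ a))
    (Y : ℝ → ℝ)
    (hY : ∀ t ∈ Set.Icc (0 : ℝ) T, Y t = Real.exp (∫ u in Set.Ioc 0 t, α (x u) ∂μ))
    (ν : Measure ℝ)
    (hν : ∀ a b : ℝ, 0 ≤ a → a ≤ b → b ≤ T →
      ν (Set.Ioc a b) = ENNReal.ofReal (Y b - Y a))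
    (s : ℝ → EuclideanSpace ℝ (Fin p))
    (hsc : ContinuousOn s (Set.Icc 0 T))
    (hsbv : BoundedVariationOn s (Set.Icc 0 T))
    (hseq : ∀ t ∈ Set.Icc (0 : ℝ) T,
      s t = s 0 + ∫ u in Set.Ioc 0 t, (g (x u) - α (x u) • s u) ∂μ) :
    ∀ t ∈ Set.Icc (0 : ℝ) T,
      s t = (Y t)⁻¹ • s 0 + (Y t)⁻¹ • ∫ u in Set.Ioc 0 t, (α (x u))⁻¹ • g (x u) ∂ν := by
  have hT0 : (0:ℝ) ≤ T := hT.le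
  -- continuous total extensions of x and s
  set xt : ℝ → EuclideanSpace ℝ (Fin n) := Set.IccExtend hT0 ((Set.Icc (0:ℝ) T).restrict x)
    with hxt
  have hxtc : Continuous xt := (hx.restrict).Icc_extend'
  have heqx : ∀ u ∈ Set.Icc (0:ℝ) T, xt u = x u := fun u hu =>
    Set.IccExtend_of_mem hT0 _ hu
  have hxtmem : ∀ u, xt u ∈ x '' Set.Icc (0:ℝ) T := fun u =>
    ⟨(Set.projIcc 0 T hT0 u : ℝ), (Set.projIcc 0 T hT0 u).2, rfl⟩
  set st : ℝ → EuclideanSpace ℝ (Fin p) := Set.IccExtend hT0 ((Set.Icc (0:ℝ) T).restrict s)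
    with hst
  have hstc : Continuous st := (hsc.restrict).Icc_extend'
  have heqs : ∀ u ∈ Set.Icc (0:ℝ) T, st u = s u := fun u hu =>
    Set.IccExtend_of_mem hT0 _ hu
  have hstmem : ∀ u, st u ∈ s '' Set.Icc (0:ℝ) T := fun u =>
    ⟨(Set.projIcc 0 T hT0 u : ℝ), (Set.projIcc 0 T hT0 u).2, rfl⟩
  -- bounded continuous data
  set a : ℝ → ℝ := fun u => α (xt u) with ha
  have hacont : Continuous a := hαc.comp hxtc
  have ha0 : ∀ u, 0 ≤ a u := fun u => le_trans hα₀.le (hα _)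
  have hane : ∀ u, a u ≠ 0 := fun u => ne_of_gt (lt_of_lt_of_le hα₀ (hα _))
  set G : ℝ → EuclideanSpace ℝ (Fin p) := fun u => g (xt u) with hG
  have hGcont : Continuous G := hgc.comp hxtc
  have hKx : IsCompact (x '' Set.Icc (0:ℝ) T) := isCompact_Icc.image_of_continuousOn hx
  have hKs : IsCompact (s '' Set.Icc (0:ℝ) T) := isCompact_Icc.image_of_continuousOn hsc
  obtain ⟨Ca, hCa⟩ := hKx.exists_bound_of_continuousOn hαc.continuousOn
  obtain ⟨Cg, hCg⟩ := hKx.exists_bound_of_continuousOn hgc.continuousOn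
  obtain ⟨Cs, hCs⟩ := hKs.exists_bound_of_continuousOn continuousOn_id
  have haC : ∀ u, ‖a u‖ ≤ Ca := fun u => hCa _ (hxtmem u)
  have hGC : ∀ u, ‖G u‖ ≤ Cg := fun u => hCg _ (hxtmem u)
  have hsC : ∀ u, ‖st u‖ ≤ Cs := fun u => hCs _ (hstmem u)
  have hCa0 : 0 ≤ Ca := le_trans (norm_nonneg _) (haC 0)
  -- finiteness of μ on subintervals
  have hμfin : ∀ u ∈ Set.Icc (0:ℝ) T, μ (Set.Ioc 0 u) ≠ ⊤ := by
    intro u hu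
    rw [hμ 0 u le_rfl hu.1 hu.2]
    exact ENNReal.ofReal_ne_top
  have hIa : ∀ u ∈ Set.Icc (0:ℝ) T, IntegrableOn a (Set.Ioc 0 u) μ := fun u hu =>
    Measure.integrableOn_of_bounded (hμfin u hu) hacont.aestronglyMeasurable
      (Filter.Eventually.of_forall haC)
  -- the cumulative function A
  set A : ℝ → ℝ := fun u => ∫ v in Set.Ioc 0 (min u T), a v ∂μ with hA
  have hAeq : ∀ u ∈ Set.Icc (0:ℝ) T, A u = ∫ v in Set.Ioc 0 u, a v ∂μ := by
    intro u hu
    simp only [hA, min_eq_left hu.2]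
  have hA0 : A 0 = 0 := by simp [hA, min_eq_left hT0]
  have hAneg : ∀ u ≤ (0:ℝ), A u = 0 := by
    intro u hu
    have : Set.Ioc (0:ℝ) (min u T) = ∅ := Set.Ioc_eq_empty (by
      simp only [not_lt]; exact le_trans (min_le_left u T) hu)
    simp [hA, this]
  have hIa' : ∀ u : ℝ, IntegrableOn a (Set.Ioc 0 (min u T)) μ := by
    intro u
    rcases le_or_gt (min u T) 0 with h | h
    · rw [Set.Ioc_eq_empty (not_lt.2 h)]
      exact integrableOn_empty
    · exact hIa _ ⟨h.le, min_le_right u T⟩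
  have hAm : Monotone A := by
    intro u v huv
    exact setIntegral_mono_set (hIa' v) (Filter.Eventually.of_forall ha0)
      ((Set.Ioc_subset_Ioc_right (min_le_min_right T huv)).eventuallyLE)
  have hAuT : ∀ u, A u = A (min u T) := by
    intro u
    simp only [hA]
    rw [min_eq_left (min_le_right u T)]
  have hAle : ∀ u, A u ≤ A T := fun u => (hAuT u) ▸ hAm (min_le_right u T)
  -- difference formula for A
  have hAdiff : ∀ c d : ℝ, 0 ≤ c → c ≤ d → d ≤ T →
      (∫ v in Set.Ioc c d, a v ∂μ) = A d - A c := by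
    intro c d hc hcd hdT
    have hunion : Set.Ioc (0:ℝ) c ∪ Set.Ioc c d = Set.Ioc 0 d :=
      Set.Ioc_union_Ioc_eq_Ioc hc hcd
    have hdisj : Disjoint (Set.Ioc (0:ℝ) c) (Set.Ioc c d) := Set.Ioc_disjoint_Ioc_of_le le_rfl
    have h1 : IntegrableOn a (Set.Ioc 0 c) μ := hIa c ⟨hc, le_trans hcd hdT⟩
    have h2 : IntegrableOn a (Set.Ioc c d) μ :=
      (hIa d ⟨le_trans hc hcd, hdT⟩).mono_set (Set.Ioc_subset_Ioc_left hc)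
    have := setIntegral_union hdisj measurableSet_Ioc h1 h2
    rw [hunion] at this
    rw [hAeq d ⟨le_trans hc hcd, hdT⟩, hAeq c ⟨hc, le_trans hcd hdT⟩, this]
    ring
  -- continuity of A
  have hAbnd : ∀ v ∈ Set.Icc (0:ℝ) T, ∀ u ∈ Set.Icc (0:ℝ) T,
      ‖A u - A v‖ ≤ Ca * |ℓ u - ℓ v| := by
    have key : ∀ c d : ℝ, c ∈ Set.Icc (0:ℝ) T → d ∈ Set.Icc (0:ℝ) T → c ≤ d →
        ‖A d - A c‖ ≤ Ca * |ℓ d - ℓ c| := by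
      intro c d hc hd hcd
      rw [← hAdiff c d hc.1 hcd hd.2]
      have hμcd : μ (Set.Ioc c d) < ⊤ := by
        rw [hμ c d hc.1 hcd hd.2]; exact ENNReal.ofReal_lt_top
      have hnorm := norm_setIntegral_le_of_norm_le_const (C := Ca) hμcd
        (fun v _ => haC v)
      refine le_trans hnorm ?_
      rw [measureReal_def, hμ c d hc.1 hcd hd.2, ENNReal.toReal_ofReal (sub_nonneg.2 (hℓm hc hd hcd))]
      have : |ℓ d - ℓ c| = ℓ d - ℓ c := abs_of_nonneg (sub_nonneg.2 (hℓm hc hd hcd))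
      rw [this]
    intro v hv u hu
    rcases le_total u v with h | h
    · rw [show ℓ u - ℓ v = -(ℓ v - ℓ u) by ring, abs_neg,
        show A u - A v = -(A v - A u) by ring, norm_neg]
      exact key u v hu hv h
    · exact key v u hv hu h
  have hAconOn : ContinuousOn A (Set.Icc 0 T) := by
    intro v hv
    have hb : Filter.Tendsto (fun u => Ca * |ℓ u - ℓ v|) (nhdsWithin v (Set.Icc 0 T))
        (nhds 0) := by
      have h1 : Filter.Tendsto ℓ (nhdsWithin v (Set.Icc 0 T)) (nhds (ℓ v)) := hℓc v hv
      have h2 : Filter.Tendsto (fun u => Ca * |ℓ u - ℓ v|) (nhdsWithin v (Set.Icc 0 T))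
          (nhds (Ca * |ℓ v - ℓ v|)) :=
        (((h1.sub_const (ℓ v)).abs).const_mul Ca)
      simpa using h2
    have hz : Filter.Tendsto (fun u => A u - A v) (nhdsWithin v (Set.Icc 0 T)) (nhds 0) := by
      apply squeeze_zero_norm' _ hb
      filter_upwards [self_mem_nhdsWithin] with u hu
      exact hAbnd v hv u hu
    have := tendsto_sub_nhds_zero_iff.1 hz
    exact this
  have hAcon : Continuous A := by
    have hclamp : ∀ u, A u = A (max 0 (min u T)) := by
      intro u
      rcases le_or_gt u 0 with h | h
      · rw [hAneg u h, max_eq_left (le_trans (min_le_left u T) h), hA0]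
      · rw [max_eq_right (le_min h.le hT0), ← hAuT]
    have hmemc : ∀ u : ℝ, max 0 (min u T) ∈ Set.Icc (0:ℝ) T :=
      fun u => ⟨le_max_left _ _, max_le hT0 (min_le_right u T)⟩
    have hcc : Continuous fun u : ℝ => max 0 (min u T) :=
      continuous_const.max (continuous_id.min continuous_const)
    have : Continuous fun u => A (max 0 (min u T)) :=
      hAconOn.comp_continuous hcc hmemc
    exact (funext hclamp : A = fun u => A (max 0 (min u T))) ▸ this
  -- E = exp ∘ A and its relation to Y
  set E : ℝ → ℝ := fun u => Real.exp (A u) with hE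
  have hEcont : Continuous E := Real.continuous_exp.comp hAcon
  have hE0 : ∀ u, 0 < E u := fun u => Real.exp_pos _
  have hEC : ∀ u, ‖E u‖ ≤ E T := by
    intro u
    rw [Real.norm_eq_abs, abs_of_pos (hE0 u)]
    exact Real.exp_le_exp.2 (hAle u)
  have hYE : ∀ u ∈ Set.Icc (0:ℝ) T, Y u = E u := by
    intro u hu
    rw [hY u hu, hE]
    congr 1
    rw [hAeq u hu]
    refine setIntegral_congr_fun measurableSet_Ioc (fun v hv => ?_)
    simp only [ha]
    rw [heqx v ⟨hv.1.le, le_trans hv.2 hu.2⟩]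
  -- chain rule for E
  have hchain : ∀ v ∈ Set.Icc (0:ℝ) T, ∫ u in Set.Ioc 0 v, a u * E u ∂μ = E v - 1 := by
    intro v hv
    have := chain_rule μ v hv.1 a A hacont ha0 hAcon hAm hA0 (hμfin v hv)
      (fun u hu => hIa u ⟨hu.1, le_trans hu.2 hv.2⟩)
      (fun u hu => hAeq u ⟨hu.1, le_trans hu.2 hv.2⟩)
    simpa [hE, Real.exp_zero] using this
  -- integrability of a * E
  have hbC : ∀ u, ‖a u * E u‖ ≤ Ca * E T := by
    intro u
    rw [norm_mul]
    exact mul_le_mul (haC u) (hEC u) (norm_nonneg _) hCa0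
  have hbcont : Continuous fun u => a u * E u := hacont.mul hEcont
  have hIb : ∀ u ∈ Set.Icc (0:ℝ) T, IntegrableOn (fun u => a u * E u) (Set.Ioc 0 u) μ :=
    fun u hu => Measure.integrableOn_of_bounded (hμfin u hu) hbcont.aestronglyMeasurable
      (Filter.Eventually.of_forall hbC)
  -- difference formula for E
  have hEdiff : ∀ c d : ℝ, 0 ≤ c → c ≤ d → d ≤ T →
      ∫ u in Set.Ioc c d, a u * E u ∂μ = E d - E c := by
    intro c d hc hcd hdT
    have hunion : Set.Ioc (0:ℝ) c ∪ Set.Ioc c d = Set.Ioc 0 d :=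
      Set.Ioc_union_Ioc_eq_Ioc hc hcd
    have hdisj : Disjoint (Set.Ioc (0:ℝ) c) (Set.Ioc c d) := Set.Ioc_disjoint_Ioc_of_le le_rfl
    have h1 : IntegrableOn (fun u => a u * E u) (Set.Ioc 0 c) μ :=
      hIb c ⟨hc, le_trans hcd hdT⟩
    have h2 : IntegrableOn (fun u => a u * E u) (Set.Ioc c d) μ :=
      (hIb d ⟨le_trans hc hcd, hdT⟩).mono_set (Set.Ioc_subset_Ioc_left hc)
    have hu := setIntegral_union hdisj measurableSet_Ioc h1 h2
    rw [hunion] at hu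
    rw [hchain d ⟨le_trans hc hcd, hdT⟩, hchain c ⟨hc, le_trans hcd hdT⟩] at hu
    linarith [hu]
  -- main assembly at a fixed time t
  intro t ht
  set m : Measure ℝ := μ.restrict (Set.Ioc 0 t) with hm
  haveI hmfin : IsFiniteMeasure m := by
    constructor
    rw [hm, Measure.restrict_apply_univ]
    exact (hμfin t ht).lt_top
  set f : ℝ → EuclideanSpace ℝ (Fin p) := fun u => G u - a u • st u with hf
  have hfcont : Continuous f := hGcont.sub (hacont.smul hstc)
  have hfC : ∀ u, ‖f u‖ ≤ Cg + Ca * Cs := by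
    intro u
    refine le_trans (norm_sub_le _ _) ?_
    have h1 : ‖a u • st u‖ ≤ Ca * Cs := by
      rw [norm_smul]
      exact mul_le_mul (haC u) (hsC u) (norm_nonneg _) hCa0
    linarith [hGC u]
  have hbint : Integrable (fun u => a u * E u) m := by rw [hm]; exact hIb t ht
  have hfint : Integrable f m := by
    rw [hm]
    exact Measure.integrableOn_of_bounded (hμfin t ht) hfcont.aestronglyMeasurable
      (Filter.Eventually.of_forall hfC)
  have hseq' : ∀ u ∈ Set.Icc (0:ℝ) T, s u = s 0 + ∫ v in Set.Ioc 0 u, f v ∂μ := by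
    intro u hu
    rw [hseq u hu]
    congr 1
    refine setIntegral_congr_fun measurableSet_Ioc (fun v hv => ?_)
    have hvI : v ∈ Set.Icc (0:ℝ) T := ⟨hv.1.le, le_trans hv.2 hu.2⟩
    simp only [hf, hG, ha]
    rw [heqx v hvI, heqs v hvI]
  have hmeasIoc : MeasurableSet (Set.Ioc (0:ℝ) t) := measurableSet_Ioc
  have hIic : ∀ u ∈ Set.Ioc (0:ℝ) t, ∫ v in Set.Iic u, f v ∂m = st u - s 0 := by
    intro u hu
    have huI : u ∈ Set.Icc (0:ℝ) T := ⟨hu.1.le, le_trans hu.2 ht.2⟩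
    rw [hm, Measure.restrict_restrict measurableSet_Iic]
    have hset : Set.Iic u ∩ Set.Ioc 0 t = Set.Ioc 0 u := by
      rw [Set.inter_comm, Set.Ioc_inter_Iic, min_eq_right hu.2]
    rw [hset, heqs u huI, hseq' u huI, add_sub_cancel_left]
  have hIio : ∀ v ∈ Set.Ioc (0:ℝ) t, ∫ u in Set.Iio v, a u * E u ∂m = E v - 1 := by
    intro v hv
    have hvI : v ∈ Set.Icc (0:ℝ) T := ⟨hv.1.le, le_trans hv.2 ht.2⟩
    rw [hm, Measure.restrict_restrict measurableSet_Iio]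
    have hset : Set.Iio v ∩ Set.Ioc 0 t = Set.Ioo 0 v := by
      ext w
      simp only [Set.mem_inter_iff, Set.mem_Iio, Set.mem_Ioc, Set.mem_Ioo]
      constructor
      · rintro ⟨h1, h2, h3⟩; exact ⟨h2, h1⟩
      · rintro ⟨h1, h2⟩; exact ⟨h2, h1, le_trans h2.le hv.2⟩
    rw [hset]
    have haeq : Set.Ioo (0:ℝ) v =ᵐ[μ] Set.Ioc 0 v := by
      apply (MeasureTheory.ae_eq_set).2
      constructor
      · rw [Set.diff_eq_empty.2 Set.Ioo_subset_Ioc_self]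
        exact measure_empty
      · rw [Set.Ioc_sdiff_Ioo_same hv.1]
        exact atom_zero T ℓ hℓc μ hμ ⟨hv.1, le_trans hv.2 ht.2⟩
    rw [setIntegral_congr_set haeq]
    exact hchain v hvI
  have hIbt : ∫ u, a u * E u ∂m = E t - 1 := by rw [hm]; exact hchain t ht
  have hIft : ∫ v, f v ∂m = s t - s 0 := by
    rw [hm]
    conv_rhs => rw [hseq' t ht]
    abel
  have hpr := prod_rule m (fun u => a u * E u) f hbint hfint
  rw [hIbt, hIft] at hpr
  have hr1 : ∫ u, (a u * E u) • (∫ v in Set.Iic u, f v ∂m) ∂m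
      = ∫ u, (a u * E u) • (st u - s 0) ∂m := by
    refine integral_congr_ae ?_
    have : Set.Ioc (0:ℝ) t ∈ ae m := by rw [hm]; exact self_mem_ae_restrict hmeasIoc
    filter_upwards [this] with u hu
    rw [hIic u hu]
  have hr2 : ∫ v, (∫ u in Set.Iio v, a u * E u ∂m) • f v ∂m
      = ∫ v, (E v - 1) • f v ∂m := by
    refine integral_congr_ae ?_
    have : Set.Ioc (0:ℝ) t ∈ ae m := by rw [hm]; exact self_mem_ae_restrict hmeasIoc
    filter_upwards [this] with v hv
    rw [hIio v hv]
  have hsint : Integrable (fun u => (a u * E u) • st u) m := by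
    rw [hm]
    refine Measure.integrableOn_of_bounded (M := (Ca * E T) * Cs) (hμfin t ht)
      ((hbcont.smul hstc).aestronglyMeasurable) (Filter.Eventually.of_forall (fun u => ?_))
    rw [norm_smul]
    exact mul_le_mul (hbC u) (hsC u) (norm_nonneg _)
      (mul_nonneg hCa0 (le_trans (norm_nonneg _) (hEC 0)))
  have hEfint : Integrable (fun v => E v • f v) m := by
    rw [hm]
    refine Measure.integrableOn_of_bounded (M := E T * (Cg + Ca * Cs)) (hμfin t ht)
      ((hEcont.smul hfcont).aestronglyMeasurable) (Filter.Eventually.of_forall (fun u => ?_))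
    rw [norm_smul]
    exact mul_le_mul (hEC u) (hfC u) (norm_nonneg _) (le_trans (norm_nonneg _) (hEC 0))
  have e1 : ∫ u, (a u * E u) • (st u - s 0) ∂m
      = (∫ u, (a u * E u) • st u ∂m) - (E t - 1) • s 0 := by
    have hfe : (fun u => (a u * E u) • (st u - s 0))
        = fun u => (a u * E u) • st u - (a u * E u) • s 0 := by
      funext u; rw [smul_sub]
    rw [hfe, integral_sub hsint (hbint.smul_const (s 0)), integral_smul_const, hIbt]
  have e2 : ∫ v, (E v - 1) • f v ∂m = (∫ v, E v • f v ∂m) - (s t - s 0) := by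
    have hfe : (fun v => (E v - 1) • f v) = fun v => E v • f v - f v := by
      funext v; rw [sub_smul, one_smul]
    rw [hfe, integral_sub hEfint hfint, hIft]
  rw [hr1, hr2, e1, e2] at hpr
  set J : EuclideanSpace ℝ (Fin p) := ∫ u, E u • G u ∂m with hJ
  have hcomb : (∫ u, (a u * E u) • st u ∂m) + (∫ v, E v • f v ∂m) = J := by
    rw [hJ, ← integral_add hsint hEfint]
    refine integral_congr_ae (Filter.Eventually.of_forall (fun u => ?_))
    simp only [hf]
    rw [smul_sub, smul_smul, mul_comm (E u) (a u)]
    abel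
  have hmain : E t • s t = s 0 + J := by
    have h3 : (∫ u, (a u * E u) • st u ∂m) + (∫ v, E v • f v ∂m)
        = (E t - 1) • (s t - s 0) + (E t - 1) • s 0 + (s t - s 0) := by
      rw [hpr]
      abel
    have h2 : J = E t • s t - s 0 := by
      rw [← hcomb, h3, sub_smul, one_smul, smul_sub, sub_smul, one_smul]
      abel
    rw [h2]
    abel
  -- identify the ν-integral with J
  set w2 : ℝ → NNReal := fun u => Real.toNNReal (a u * E u) with hw2
  have hw2m : Measurable w2 := (continuous_real_toNNReal.comp hbcont).measurable
  have hbE0 : ∀ u, 0 ≤ a u * E u := fun u => mul_nonneg (ha0 u) (hE0 u).le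
  have hlIoc : ∀ c d : ℝ, 0 ≤ c → c ≤ d → d ≤ T →
      ∫⁻ v in Set.Ioc c d, (w2 v : ENNReal) ∂μ = ENNReal.ofReal (E d - E c) := by
    intro c d hc hcd hdT
    have hi : IntegrableOn (fun u => a u * E u) (Set.Ioc c d) μ :=
      (hIb d ⟨le_trans hc hcd, hdT⟩).mono_set (Set.Ioc_subset_Ioc_left hc)
    have hco : ∀ v, (w2 v : ENNReal) = ENNReal.ofReal (a v * E v) := fun v => rfl
    simp_rw [hco]
    rw [← ofReal_integral_eq_lintegral_ofReal hi (Filter.Eventually.of_forall hbE0),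
      hEdiff c d hc hcd hdT]
  have hE1 : E 0 = 1 := by rw [hE]; simp [hA0]
  have hnula : ν.restrict (Set.Ioc 0 t) = m.withDensity (fun u => (w2 u : ENNReal)) := by
    haveI hfin1 : IsFiniteMeasure (ν.restrict (Set.Ioc 0 t)) := by
      constructor
      rw [Measure.restrict_apply_univ, hν 0 t le_rfl ht.1 ht.2]
      exact ENNReal.ofReal_lt_top
    apply Measure.ext_of_Ioc_finite
    · rw [Measure.restrict_apply_univ, withDensity_apply _ MeasurableSet.univ,
        Measure.restrict_univ, hm, hlIoc 0 t le_rfl ht.1 ht.2,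
        hν 0 t le_rfl ht.1 ht.2, hYE t ht, hYE 0 (Set.left_mem_Icc.2 hT0), hE1]
    · intro c d hcd
      rw [Measure.restrict_apply measurableSet_Ioc,
        withDensity_apply _ measurableSet_Ioc, hm, Measure.restrict_restrict measurableSet_Ioc,
        Set.Ioc_inter_Ioc]
      rcases le_or_gt (d ⊓ t) (c ⊔ 0) with h | h
      · rw [Set.Ioc_eq_empty (not_lt.2 h)]
        simp
      · have h0 : (0:ℝ) ≤ c ⊔ 0 := le_sup_right
        have hdT' : d ⊓ t ≤ T := le_trans inf_le_right ht.2
        rw [hν _ _ h0 h.le hdT', hlIoc _ _ h0 h.le hdT',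
          hYE _ ⟨le_trans h0 h.le, hdT'⟩, hYE _ ⟨h0, le_trans h.le hdT'⟩]
  have hR : ∫ u in Set.Ioc 0 t, (α (x u))⁻¹ • g (x u) ∂ν = J := by
    have hrfl : ∫ u in Set.Ioc 0 t, (α (x u))⁻¹ • g (x u) ∂ν
        = ∫ u, (α (x u))⁻¹ • g (x u) ∂(ν.restrict (Set.Ioc 0 t)) := rfl
    rw [hrfl, hnula, integral_withDensity_eq_integral_smul hw2m, hJ]
    refine integral_congr_ae ?_
    have hae : Set.Ioc (0:ℝ) t ∈ ae m := by rw [hm]; exact self_mem_ae_restrict hmeasIoc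
    filter_upwards [hae] with u hu
    have huI : u ∈ Set.Icc (0:ℝ) T := ⟨hu.1.le, le_trans hu.2 ht.2⟩
    rw [← heqx u huI, NNReal.smul_def, Real.coe_toNNReal _ (hbE0 u), smul_smul]
    have hsc2 : a u * E u * (a u)⁻¹ = E u := by
      rw [mul_comm (a u) (E u), mul_assoc, mul_inv_cancel₀ (hane u), mul_one]
    rw [hsc2]
  rw [hYE t ht, hR]
  have h4 : s t = (E t)⁻¹ • (s 0 + J) := by
    rw [← hmain, inv_smul_smul₀ (ne_of_gt (hE0 t))]
  rw [h4, smul_add]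
end

section
/- Let g₁, …, g_{p+1} ∈ ℝᵖ satisfy: every y ∈ ℝᵖ is a nonnegative combination of g₁,…,g_{p+1}. Then for every ε > 0, the set U_ε = { Σⱼ ηⱼ gⱼ : ηⱼ ≥ 0, Σⱼ ηⱼ < ε } is an open neighborhood of 0 in ℝᵖ. -/
open Finset

lemma coord_abs_le_norm (p : ℕ) (x : EuclideanSpace ℝ (Fin p)) (i : Fin p) :
    |x i| ≤ ‖x‖ := by
  have h := abs_real_inner_le_norm (EuclideanSpace.single i (1:ℝ)) x
  simpa [EuclideanSpace.inner_single_left, EuclideanSpace.norm_single] using h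

lemma sum_single_coords (p : ℕ) (x : EuclideanSpace ℝ (Fin p)) :
    x = ∑ i, x i • EuclideanSpace.single i (1:ℝ) := by
  ext j
  rw [show ((∑ i, x i • EuclideanSpace.single i (1:ℝ)) j) = ∑ i, (x i • EuclideanSpace.single i (1:ℝ)) j from by rw [WithLp.ofLp_sum]; exact Finset.sum_apply j Finset.univ _]
  simp [EuclideanSpace.single_apply]

lemma small_mem (p : ℕ)
    (g : Fin (p + 1) → EuclideanSpace ℝ (Fin p))
    (hA1 : ∀ y : EuclideanSpace ℝ (Fin p),
      ∃ lam : Fin (p + 1) → ℝ, (∀ j, 0 ≤ lam j) ∧ y = ∑ j, lam j • g j) :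
    ∀ ε > 0, ∃ δ > 0, ∀ x : EuclideanSpace ℝ (Fin p), ‖x‖ < δ →
      ∃ η : Fin (p + 1) → ℝ,
        (∀ j, 0 ≤ η j) ∧ (∑ j, η j) < ε ∧ x = ∑ j, η j • g j := by
  intro ε hε
  choose lam hlam hrep using hA1
  set e : Fin p → EuclideanSpace ℝ (Fin p) := fun i => EuclideanSpace.single i (1:ℝ) with he
  set α : Fin p → Fin (p+1) → ℝ := fun i => lam (e i) with hα
  set β : Fin p → Fin (p+1) → ℝ := fun i => lam (-(e i)) with hβ
  set C : ℝ := (∑ i, ((∑ j, α i j) + (∑ j, β i j))) + 1 with hC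
  have hCpos : 0 < C := by
    have : (0:ℝ) ≤ ∑ i, ((∑ j, α i j) + (∑ j, β i j)) := by
      apply Finset.sum_nonneg
      intro i _
      have h1 : (0:ℝ) ≤ ∑ j, α i j := Finset.sum_nonneg fun j _ => hlam _ j
      have h2 : (0:ℝ) ≤ ∑ j, β i j := Finset.sum_nonneg fun j _ => hlam _ j
      linarith
    linarith
  refine ⟨ε / C, div_pos hε hCpos, fun x hx => ?_⟩
  refine ⟨fun j => ∑ i, (max (x i) 0 * α i j + max (-(x i)) 0 * β i j), ?_, ?_, ?_⟩
  · intro j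
    apply Finset.sum_nonneg
    intro i _
    have := hlam (e i) j
    have := hlam (-(e i)) j
    positivity
  · -- sum bound
    have hxn : (0:ℝ) ≤ ‖x‖ := norm_nonneg x
    calc ∑ j, ∑ i, (max (x i) 0 * α i j + max (-(x i)) 0 * β i j)
        = ∑ i, (max (x i) 0 * (∑ j, α i j) + max (-(x i)) 0 * (∑ j, β i j)) := by
          rw [Finset.sum_comm]
          simp [Finset.sum_add_distrib, Finset.mul_sum]
      _ ≤ ∑ i, (‖x‖ * (∑ j, α i j) + ‖x‖ * (∑ j, β i j)) := by
          apply Finset.sum_le_sum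
          intro i _
          have h1 : (0:ℝ) ≤ ∑ j, α i j := Finset.sum_nonneg fun j _ => hlam _ j
          have h2 : (0:ℝ) ≤ ∑ j, β i j := Finset.sum_nonneg fun j _ => hlam _ j
          have hxi : max (x i) 0 ≤ ‖x‖ :=
            le_trans (max_le (le_abs_self _) (abs_nonneg _)) (coord_abs_le_norm p x i)
          have hxi' : max (-(x i)) 0 ≤ ‖x‖ := by
            refine le_trans (max_le ?_ (abs_nonneg (x i))) (coord_abs_le_norm p x i)
            exact neg_le_abs _
          gcongr
      _ = ‖x‖ * (C - 1) := by
          rw [hC, add_sub_cancel_right, Finset.mul_sum]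
          exact Finset.sum_congr rfl fun i _ => by ring
      _ ≤ ‖x‖ * C := by nlinarith
      _ < (ε / C) * C := by
          apply mul_lt_mul_of_pos_right hx hCpos
      _ = ε := div_mul_cancel₀ ε (ne_of_gt hCpos)
  · -- representation
    calc x = ∑ i, x i • e i := sum_single_coords p x
      _ = ∑ i, (max (x i) 0 • e i + max (-(x i)) 0 • (-(e i))) := by
          apply Finset.sum_congr rfl
          intro i _
          rw [smul_neg, ← sub_eq_add_neg, ← sub_smul, max_zero_sub_max_neg_zero_eq_self]
      _ = ∑ i, (max (x i) 0 • (∑ j, α i j • g j) + max (-(x i)) 0 • (∑ j, β i j • g j)) := by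
          apply Finset.sum_congr rfl
          intro i _
          rw [← hrep (e i), ← hrep (-(e i))]
      _ = ∑ i, ∑ j, (max (x i) 0 * α i j + max (-(x i)) 0 * β i j) • g j := by
          apply Finset.sum_congr rfl
          intro i _
          rw [Finset.smul_sum, Finset.smul_sum, ← Finset.sum_add_distrib]
          apply Finset.sum_congr rfl
          intro j _
          rw [add_smul, smul_smul, smul_smul]
      _ = ∑ j, (∑ i, (max (x i) 0 * α i j + max (-(x i)) 0 * β i j)) • g j := by
          rw [Finset.sum_comm]
          apply Finset.sum_congr rfl
          intro j _
          rw [Finset.sum_smul]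
  
/-- Lemma 3.1: under assumption A1, the set
`U_ε = { Σⱼ ηⱼ gⱼ : ηⱼ ≥ 0, Σⱼ ηⱼ < ε }` is an open neighborhood of `0`. -/
theorem Ueps_open_nbhd_of_zero (p : ℕ)
    (g : Fin (p + 1) → EuclideanSpace ℝ (Fin p))
    (hA1 : ∀ y : EuclideanSpace ℝ (Fin p),
      ∃ lam : Fin (p + 1) → ℝ, (∀ j, 0 ≤ lam j) ∧ y = ∑ j, lam j • g j) :
    ∀ ε > 0,
      IsOpen {y : EuclideanSpace ℝ (Fin p) | ∃ η : Fin (p + 1) → ℝ,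
        (∀ j, 0 ≤ η j) ∧ (∑ j, η j) < ε ∧ y = ∑ j, η j • g j} ∧
      (0 : EuclideanSpace ℝ (Fin p)) ∈ {y : EuclideanSpace ℝ (Fin p) | ∃ η : Fin (p + 1) → ℝ,
        (∀ j, 0 ≤ η j) ∧ (∑ j, η j) < ε ∧ y = ∑ j, η j • g j} := by
  intro ε hε
  constructor
  · rw [Metric.isOpen_iff]
    rintro x ⟨η, hη, hηs, hηx⟩
    obtain ⟨δ, hδ, hδmem⟩ := small_mem p g hA1 (ε - ∑ j, η j) (by linarith)
    refine ⟨δ, hδ, fun z hz => ?_⟩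
    obtain ⟨η', hη', hη's, hη'z⟩ := hδmem (z - x) (by
      rw [Metric.mem_ball, dist_eq_norm] at hz; simpa using hz)
    refine ⟨fun j => η j + η' j, fun j => add_nonneg (hη j) (hη' j), by
      rw [Finset.sum_add_distrib]; linarith, ?_⟩
    have hkey : ∑ j, (η j + η' j) • g j = z := by
      simp only [add_smul]
      rw [Finset.sum_add_distrib, ← hηx, ← hη'z]
      abel
    exact hkey.symm
  · exact ⟨fun _ => 0, fun j => le_refl 0, by simpa using hε, by simp⟩
end

section
/- Let g₁, …, g_p be linearly independent vectors in ℝᵖ, and let α₁, …, α_p > 0. Define v : (0,1]ᵖ → ℝᵖ by v(t₁,…,t_p) = Σ_{j=1}^p exp(−Σ_{k=j}^p α_k t_k) · (g_j/α_j) · (exp(α_j t_j) − 1). Then the Jacobian determinant of v satisfies det Dv(t₁,…,t_p) = C · exp(−Σ_{k=1}^p k α_k t_k), where C = det[g₁ | ⋯ | g_p] ≠ 0 is independent of (t₁,…,t_p). -/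
open Finset Matrix

/-- Lemma 3.9 (Jacobian computation): for `v(t) = Σⱼ exp(−Σ_{k≥j} αₖ tₖ) (gⱼ/αⱼ)
(exp(αⱼ tⱼ) − 1)` with `g₁,…,g_p` linearly independent and `αⱼ > 0`, the Jacobian
determinant is `det[g₁|⋯|g_p] · exp(−Σₖ k αₖ tₖ)`, with nonzero constant. -/
theorem jacobian_det (p : ℕ) (g : Fin p → (Fin p → ℝ))
    (hg : LinearIndependent ℝ g)
    (α : Fin p → ℝ) (hα : ∀ j, 0 < α j)
    (v : (Fin p → ℝ) → (Fin p → ℝ))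
    (hv : ∀ t, v t = ∑ j,
      (Real.exp (-(∑ k ∈ Finset.Ici j, α k * t k)) / α j *
        (Real.exp (α j * t j) - 1)) • g j)
    (t : Fin p → ℝ) (ht : ∀ k, t k ∈ Set.Ioc (0 : ℝ) 1) :
    LinearMap.det ((fderiv ℝ v t).toLinearMap) =
        (Matrix.of fun i j => g j i).det *
          Real.exp (-(∑ k : Fin p, ((k.val + 1 : ℕ) : ℝ) * (α k * t k))) ∧
      (Matrix.of fun i j => g j i).det ≠ 0 := by
  have hαne : ∀ j, α j ≠ 0 := fun j => (hα j).ne'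
  -- the matrix of the g's
  set Tg : Matrix (Fin p) (Fin p) ℝ := Matrix.of fun i j => g j i with hTgdef
  -- the upper triangular matrix Λ
  set Λ : Matrix (Fin p) (Fin p) ℝ := fun j m =>
    if j = m then Real.exp (-(∑ k ∈ Finset.Ici j, α k * t k))
    else if j ≤ m then
      -(α m) * (Real.exp (-(∑ k ∈ Finset.Ici j, α k * t k)) / α j *
        (Real.exp (α j * t j) - 1))
    else 0 with hΛdef
  -- derivative of each coefficient
  have key : ∀ j : Fin p, ∃ D : (Fin p → ℝ) →L[ℝ] ℝ,
      HasFDerivAt (fun s : Fin p → ℝ =>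
        Real.exp (-(∑ k ∈ Finset.Ici j, α k * s k)) / α j *
          (Real.exp (α j * s j) - 1)) D t ∧
      ∀ m, D (Pi.single m 1) = Λ j m := by
    intro j
    set Sc : (Fin p → ℝ) →L[ℝ] ℝ :=
      ∑ k ∈ Finset.Ici j, (α k) • (ContinuousLinearMap.proj k :
        (Fin p → ℝ) →L[ℝ] ℝ) with hScdef
    have hSc : ∀ s : Fin p → ℝ, Sc s = ∑ k ∈ Finset.Ici j, α k * s k := by
      intro s
      simp [hScdef, ContinuousLinearMap.sum_apply, smul_eq_mul]
    have hS : HasFDerivAt (fun s : Fin p → ℝ => ∑ k ∈ Finset.Ici j, α k * s k)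
        Sc t := by
      have := Sc.hasFDerivAt (x := t)
      have hfun : ⇑Sc = fun s : Fin p → ℝ => ∑ k ∈ Finset.Ici j, α k * s k :=
        funext hSc
      rwa [hfun] at this
    have hA : HasFDerivAt (fun s : Fin p → ℝ =>
        Real.exp (-(∑ k ∈ Finset.Ici j, α k * s k)))
        (Real.exp (-(∑ k ∈ Finset.Ici j, α k * t k)) • (-Sc)) t := hS.neg.exp
    have hproj : HasFDerivAt (fun s : Fin p → ℝ => α j * s j)
        ((α j) • (ContinuousLinearMap.proj j : (Fin p → ℝ) →L[ℝ] ℝ)) t :=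
      (ContinuousLinearMap.proj j :
        (Fin p → ℝ) →L[ℝ] ℝ).hasFDerivAt.const_mul (α j)
    have hB : HasFDerivAt (fun s : Fin p → ℝ => Real.exp (α j * s j) - 1)
        (Real.exp (α j * t j) • ((α j) • (ContinuousLinearMap.proj j :
          (Fin p → ℝ) →L[ℝ] ℝ))) t := (hproj.exp).sub_const 1
    refine ⟨_, ((hA.mul_const (α j)⁻¹).mul hB : _), ?_⟩
    intro m
    have hevSc : Sc (Pi.single m 1) = if j ≤ m then α m else 0 := by
      rw [hSc]
      simp [Pi.single_apply, mul_ite, mul_one, mul_zero, Finset.sum_ite_eq']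
    have hevproj : (ContinuousLinearMap.proj m :
        (Fin p → ℝ) →L[ℝ] ℝ) = (ContinuousLinearMap.proj m) := rfl
    simp only [ContinuousLinearMap.add_apply, ContinuousLinearMap.smul_apply,
      ContinuousLinearMap.coe_smul', Pi.smul_apply, ContinuousLinearMap.neg_apply,
      ContinuousLinearMap.proj_apply, hevSc, smul_eq_mul]
    rw [hΛdef]
    rcases lt_trichotomy j m with h | h | h
    · have h1 : j ≠ m := h.ne
      have h2 : j ≤ m := h.le
      have h3 : (Pi.single m 1 : Fin p → ℝ) j = 0 := by simp [Pi.single_apply, h1]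
      simp only [h3, if_pos h2, if_neg h1]
      field_simp
      ring
    · subst h
      have h3 : (Pi.single j 1 : Fin p → ℝ) j = 1 := by simp
      simp only [h3, if_pos (le_refl j), if_pos rfl]
      field_simp
      rw [div_eq_iff (hαne j)]
      simp only [↓reduceIte]
      ring
    · have h1 : j ≠ m := h.ne'
      have h2 : ¬ j ≤ m := not_le.mpr h
      have h3 : (Pi.single m 1 : Fin p → ℝ) j = 0 := by simp [Pi.single_apply, h1]
      simp only [h3, if_neg h2, if_neg h1]
      ring
  choose D hD hDm using key
  -- the total derivative
  have hveq : v = fun s => ∑ j,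
      (Real.exp (-(∑ k ∈ Finset.Ici j, α k * s k)) / α j *
        (Real.exp (α j * s j) - 1)) • g j := funext hv
  have hL : HasFDerivAt v (∑ j, (D j).smulRight (g j)) t := by
    rw [hveq]
    exact HasFDerivAt.fun_sum fun j _ => (hD j).smul_const (g j)
  have hfd : fderiv ℝ v t = ∑ j, (D j).smulRight (g j) := hL.fderiv
  -- compute the matrix of the derivative
  have hmat : LinearMap.toMatrix' ((fderiv ℝ v t).toLinearMap) = Tg * Λ := by
    ext i m
    rw [LinearMap.toMatrix'_apply]
    have hsingle : (fun j' : Fin p => if j' = m then (1:ℝ) else 0) =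
        Pi.single m 1 := by
      ext k; simp [Pi.single_apply]
    rw [hfd]
    simp only [ContinuousLinearMap.coe_coe, ContinuousLinearMap.sum_apply,
      ContinuousLinearMap.smulRight_apply, Finset.sum_apply, Pi.smul_apply,
      smul_eq_mul, Matrix.mul_apply, hTgdef, Matrix.of_apply]
    refine Finset.sum_congr rfl fun j _ => ?_
    rw [hDm j m]
    ring
  -- triangular determinant
  have hΛtri : Λ.BlockTriangular id := by
    intro a b hab
    simp only [id_eq] at hab
    simp only [hΛdef]
    rw [if_neg (hab.ne'), if_neg (not_le.mpr hab)]
  have hΛdet : Λ.det = Real.exp (-(∑ k : Fin p, ((k.val + 1 : ℕ) : ℝ) * (α k * t k))) := by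
    rw [Matrix.det_of_upperTriangular hΛtri]
    have hdiag : ∀ j : Fin p, Λ j j = Real.exp (-(∑ k ∈ Finset.Ici j, α k * t k)) := by
      intro j; simp [hΛdef]
    calc ∏ j, Λ j j = ∏ j, Real.exp (-(∑ k ∈ Finset.Ici j, α k * t k)) :=
          Finset.prod_congr rfl fun j _ => hdiag j
      _ = Real.exp (∑ j : Fin p, -(∑ k ∈ Finset.Ici j, α k * t k)) :=
          (Real.exp_sum _ _).symm
      _ = Real.exp (-(∑ k : Fin p, ((k.val + 1 : ℕ) : ℝ) * (α k * t k))) := by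
          have hsum : ∑ j : Fin p, ∑ k ∈ Finset.Ici j, α k * t k
              = ∑ k : Fin p, ((k.val + 1 : ℕ) : ℝ) * (α k * t k) := by
            calc ∑ j : Fin p, ∑ k ∈ Finset.Ici j, α k * t k
                = ∑ j : Fin p, ∑ k : Fin p, if j ≤ k then α k * t k else 0 := by
                  refine Finset.sum_congr rfl fun j _ => ?_
                  rw [← Finset.sum_filter]
                  congr 1
                  ext k
                  simp
              _ = ∑ k : Fin p, ∑ j : Fin p, if j ≤ k then α k * t k else 0 :=
                  Finset.sum_comm
              _ = ∑ k : Fin p, ((k.val + 1 : ℕ) : ℝ) * (α k * t k) := by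
                  refine Finset.sum_congr rfl fun k _ => ?_
                  rw [← Finset.sum_filter, Finset.sum_const]
                  have hcard : (Finset.univ.filter (fun j => j ≤ k)).card
                      = k.val + 1 := by
                    have hfil : Finset.univ.filter (fun j => j ≤ k)
                        = Finset.Iic k := by
                      ext x; simp
                    rw [hfil, Fin.card_Iic]
                  rw [hcard, nsmul_eq_mul]
          rw [← hsum]
          congr 1
          rw [← Finset.sum_neg_distrib]

  constructor
  · rw [← LinearMap.det_toMatrix' ((fderiv ℝ v t).toLinearMap), hmat,
      Matrix.det_mul, hΛdet]
  · have hrows : (fun j => Tgᵀ j) = g := by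
      ext j i; simp [hTgdef]
    have hunit : IsUnit Tg :=
      Matrix.linearIndependent_cols_iff_isUnit.mp (by exact hg)
    exact ((Matrix.isUnit_iff_isUnit_det Tg).mp hunit).ne_zero
end

section
/- Let α, β > 0 and a(s) = (2/(α+β)) · (s − (α−β)/2)/√((α−s)(β+s)), b(s) = 1/√((α−s)(β+s)) for s ∈ (−β, α). Then the function ρ(y,s) = a(s)y + b(s) is integrable on [−1,1] × (−β, α) (with respect to 2-dimensional Lebesgue measure), even though ρ(y,s) → ∞ as (y,s) → (1,α) and as (y,s) → (−1,−β). -/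
open MeasureTheory

private lemma sqrt_subadd (u v : ℝ) (hu : 0 ≤ u) (hv : 0 ≤ v) :
    Real.sqrt (u + v) ≤ Real.sqrt u + Real.sqrt v := by
  rw [show Real.sqrt u + Real.sqrt v = Real.sqrt ((Real.sqrt u + Real.sqrt v)^2) from
    (Real.sqrt_sq (by positivity)).symm]
  apply Real.sqrt_le_sqrt
  nlinarith [Real.sq_sqrt hu, Real.sq_sqrt hv, Real.sqrt_nonneg u, Real.sqrt_nonneg v]

private lemma inv_sqrt_bound (α β s : ℝ) (hα : 0 < α) (hβ : 0 < β)
    (hs : s ∈ Set.Ioo (-β) α) :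
    (Real.sqrt ((α - s) * (β + s)))⁻¹ ≤
      Real.sqrt (2 / (α + β)) * ((α - s) ^ (-(1/2) : ℝ) + (β + s) ^ (-(1/2) : ℝ)) := by
  set u := α - s with hu'
  set v := β + s with hv'
  have hu : 0 < u := by simp only [hu']; linarith [hs.2]
  have hv : 0 < v := by simp only [hv']; linarith [hs.1]
  have hru : u ^ (-(1/2) : ℝ) = (Real.sqrt u)⁻¹ := by
    rw [Real.rpow_neg hu.le, Real.sqrt_eq_rpow]
  have hrv : v ^ (-(1/2) : ℝ) = (Real.sqrt v)⁻¹ := by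
    rw [Real.rpow_neg hv.le, Real.sqrt_eq_rpow]
  rw [hru, hrv]
  have hsu : 0 < Real.sqrt u := Real.sqrt_pos.2 hu
  have hsv : 0 < Real.sqrt v := Real.sqrt_pos.2 hv
  have key : 1 ≤ Real.sqrt (2 / (α + β)) * (Real.sqrt u + Real.sqrt v) := by
    have h4 : Real.sqrt (u + v) ≤ Real.sqrt u + Real.sqrt v := sqrt_subadd u v hu.le hv.le
    have h5 : Real.sqrt (2 / (α + β)) * Real.sqrt (u + v) = Real.sqrt 2 := by
      rw [← Real.sqrt_mul (by positivity)]
      congr 1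
      have huv : u + v = α + β := by simp only [hu', hv']; ring
      rw [huv]; field_simp
    have h6 : (1 : ℝ) ≤ Real.sqrt 2 := by
      rw [show (1:ℝ) = Real.sqrt 1 from Real.sqrt_one.symm]
      exact Real.sqrt_le_sqrt (by norm_num)
    calc (1:ℝ) ≤ Real.sqrt 2 := h6
      _ = Real.sqrt (2 / (α + β)) * Real.sqrt (u + v) := h5.symm
      _ ≤ Real.sqrt (2 / (α + β)) * (Real.sqrt u + Real.sqrt v) := by
          gcongr
  calc (Real.sqrt (u * v))⁻¹ = 1 * (Real.sqrt u * Real.sqrt v)⁻¹ := by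
        rw [Real.sqrt_mul hu.le, one_mul]
    _ ≤ (Real.sqrt (2 / (α + β)) * (Real.sqrt u + Real.sqrt v)) *
          (Real.sqrt u * Real.sqrt v)⁻¹ := by gcongr
    _ = Real.sqrt (2 / (α + β)) * ((Real.sqrt u)⁻¹ + (Real.sqrt v)⁻¹) := by
        field_simp; ring

/-- The wristband stationary density `ρ(y,s) = a(s) y + b(s)` is integrable on
`[−1,1] × (−β,α)` even though it blows up at the corners `(1,α)` and `(−1,−β)`. -/
theorem wristband_density_integrable (α β : ℝ) (hα : 0 < α) (hβ : 0 < β) :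
    IntegrableOn
        (fun z : ℝ × ℝ =>
          (2 / (α + β)) * (z.2 - (α - β) / 2) / Real.sqrt ((α - z.2) * (β + z.2)) * z.1 +
            1 / Real.sqrt ((α - z.2) * (β + z.2)))
        (Set.Icc (-1 : ℝ) 1 ×ˢ Set.Ioo (-β) α) volume ∧
      Filter.Tendsto
        (fun z : ℝ × ℝ =>
          (2 / (α + β)) * (z.2 - (α - β) / 2) / Real.sqrt ((α - z.2) * (β + z.2)) * z.1 +
            1 / Real.sqrt ((α - z.2) * (β + z.2)))
        (nhdsWithin ((1 : ℝ), α) (Set.Ioo (-1 : ℝ) 1 ×ˢ Set.Ioo (-β) α)) Filter.atTop ∧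
      Filter.Tendsto
        (fun z : ℝ × ℝ =>
          (2 / (α + β)) * (z.2 - (α - β) / 2) / Real.sqrt ((α - z.2) * (β + z.2)) * z.1 +
            1 / Real.sqrt ((α - z.2) * (β + z.2)))
        (nhdsWithin ((-1 : ℝ), -β) (Set.Ioo (-1 : ℝ) 1 ×ˢ Set.Ioo (-β) α)) Filter.atTop := by
  have hab : (0:ℝ) < α + β := by linarith
  have hpt : ∀ z : ℝ × ℝ,
      (2 / (α + β)) * (z.2 - (α - β) / 2) / Real.sqrt ((α - z.2) * (β + z.2)) * z.1 +
          1 / Real.sqrt ((α - z.2) * (β + z.2))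
        = ((2 / (α + β)) * (z.2 - (α - β) / 2) * z.1 + 1) *
          (Real.sqrt ((α - z.2) * (β + z.2)))⁻¹ := by
    intro z
    rw [div_mul_eq_mul_div, ← add_div, div_eq_mul_inv]
  have hFeq : (fun z : ℝ × ℝ =>
        (2 / (α + β)) * (z.2 - (α - β) / 2) / Real.sqrt ((α - z.2) * (β + z.2)) * z.1 +
          1 / Real.sqrt ((α - z.2) * (β + z.2)))
      = fun z : ℝ × ℝ => ((2 / (α + β)) * (z.2 - (α - β) / 2) * z.1 + 1) *
          (Real.sqrt ((α - z.2) * (β + z.2)))⁻¹ := funext hpt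
  have hsqrt_lim : ∀ p : ℝ × ℝ, (α - p.2) * (β + p.2) = 0 →
      Filter.Tendsto (fun z : ℝ × ℝ => Real.sqrt ((α - z.2) * (β + z.2)))
        (nhdsWithin p (Set.Ioo (-1 : ℝ) 1 ×ˢ Set.Ioo (-β) α)) (nhdsWithin 0 (Set.Ioi 0)) := by
    intro p hp
    rw [tendsto_nhdsWithin_iff]
    constructor
    · have hc : Continuous fun z : ℝ × ℝ => Real.sqrt ((α - z.2) * (β + z.2)) := by fun_prop
      have h : Filter.Tendsto (fun z : ℝ × ℝ => Real.sqrt ((α - z.2) * (β + z.2)))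
          (nhdsWithin p (Set.Ioo (-1 : ℝ) 1 ×ˢ Set.Ioo (-β) α))
          (nhds (Real.sqrt ((α - p.2) * (β + p.2)))) :=
        (hc.tendsto p).mono_left nhdsWithin_le_nhds
      simpa [hp] using h
    · filter_upwards [self_mem_nhdsWithin] with z hz
      exact Real.sqrt_pos.2 (mul_pos (by linarith [hz.2.2]) (by linarith [hz.2.1]))
  have hnum_cont : Continuous fun z : ℝ × ℝ => (2 / (α + β)) * (z.2 - (α - β) / 2) * z.1 + 1 :=
    by fun_prop
  refine ⟨?_, ?_, ?_⟩
  · -- integrability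
    have hG1 : IntegrableOn (fun s : ℝ => (α - s) ^ (-(1/2) : ℝ) + (β + s) ^ (-(1/2) : ℝ))
        (Set.Ioo (-β) α) volume := by
      have hle : (-β : ℝ) ≤ α := by linarith
      have h1 : IntervalIntegrable (fun x : ℝ => x ^ (-(1/2) : ℝ)) volume 0 (α + β) :=
        intervalIntegral.intervalIntegrable_rpow' (by norm_num)
      have h2 := (h1.comp_sub_left α).symm
      have h3 := h1.comp_add_right β
      rw [show α - (α + β) = -β by ring, sub_zero] at h2
      rw [show (0:ℝ) - β = -β by ring, show α + β - β = α by ring] at h3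
      have h2' := (intervalIntegrable_iff_integrableOn_Ioo_of_le hle).1 h2
      have h3' := (intervalIntegrable_iff_integrableOn_Ioo_of_le hle).1 h3
      have h3'' : IntegrableOn (fun s : ℝ => (β + s) ^ (-(1/2) : ℝ))
          (Set.Ioo (-β) α) volume := by simpa [add_comm] using h3'
      exact h2'.add h3''
    have hprod : IntegrableOn (fun z : ℝ × ℝ => (2 * Real.sqrt (2 / (α + β))) *
        ((α - z.2) ^ (-(1/2) : ℝ) + (β + z.2) ^ (-(1/2) : ℝ)))
        (Set.Icc (-1 : ℝ) 1 ×ˢ Set.Ioo (-β) α) volume := by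
      rw [IntegrableOn, Measure.volume_eq_prod, ← Measure.prod_restrict]
      exact Integrable.mul_prod (integrableOn_const (C := (2 * Real.sqrt (2 / (α + β)) : ℝ)) measure_Icc_lt_top.ne) hG1
    refine hprod.mono' ?_ ?_
    · apply Measurable.aestronglyMeasurable
      fun_prop
    · rw [ae_restrict_iff' (measurableSet_Icc.prod measurableSet_Ioo)]
      filter_upwards with z hz
      obtain ⟨hz1, hz2⟩ := hz
      have hd0 : (0:ℝ) ≤ (Real.sqrt ((α - z.2) * (β + z.2)))⁻¹ := by positivity
      have hy : |z.1| ≤ 1 := abs_le.2 ⟨hz1.1, hz1.2⟩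
      have hA : |2 / (α + β) * (z.2 - (α - β) / 2) * z.1| ≤ 1 := by
        rw [abs_mul, abs_mul]
        have h1 : |(2 : ℝ) / (α + β)| = 2 / (α + β) := abs_of_pos (by positivity)
        have h2 : |z.2 - (α - β) / 2| ≤ (α + β) / 2 := by
          rw [abs_le]
          obtain ⟨hl, hr⟩ := hz2
          constructor <;> linarith
        calc |2 / (α + β)| * |z.2 - (α - β) / 2| * |z.1|
            ≤ (2 / (α + β)) * ((α + β) / 2) * 1 := by
              rw [h1]; gcongr
          _ = 1 := by field_simp
      have hnum : |2 / (α + β) * (z.2 - (α - β) / 2) * z.1 + 1| ≤ 2 := by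
        calc |2 / (α + β) * (z.2 - (α - β) / 2) * z.1 + 1|
            ≤ |2 / (α + β) * (z.2 - (α - β) / 2) * z.1| + |(1:ℝ)| := abs_add_le _ _
          _ ≤ 2 := by rw [abs_one]; linarith
      rw [Real.norm_eq_abs, hpt z]
      calc |(2 / (α + β) * (z.2 - (α - β) / 2) * z.1 + 1) *
              (Real.sqrt ((α - z.2) * (β + z.2)))⁻¹|
          = |2 / (α + β) * (z.2 - (α - β) / 2) * z.1 + 1| *
              (Real.sqrt ((α - z.2) * (β + z.2)))⁻¹ := by
            rw [abs_mul, abs_of_nonneg hd0]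
        _ ≤ 2 * (Real.sqrt ((α - z.2) * (β + z.2)))⁻¹ := by gcongr
        _ ≤ 2 * (Real.sqrt (2 / (α + β)) *
              ((α - z.2) ^ (-(1/2) : ℝ) + (β + z.2) ^ (-(1/2) : ℝ))) := by
            have := inv_sqrt_bound α β z.2 hα hβ hz2
            linarith
        _ = (2 * Real.sqrt (2 / (α + β))) *
              ((α - z.2) ^ (-(1/2) : ℝ) + (β + z.2) ^ (-(1/2) : ℝ)) := by ring
  · -- corner (1, α)
    rw [hFeq]
    apply Filter.Tendsto.pos_mul_atTop (show (0:ℝ) < 2 by norm_num)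
    · have h : Filter.Tendsto (fun z : ℝ × ℝ => (2 / (α + β)) * (z.2 - (α - β) / 2) * z.1 + 1)
          (nhdsWithin ((1 : ℝ), α) (Set.Ioo (-1 : ℝ) 1 ×ˢ Set.Ioo (-β) α))
          (nhds ((2 / (α + β)) * (((1 : ℝ), α).2 - (α - β) / 2) * ((1 : ℝ), α).1 + 1)) :=
        (hnum_cont.tendsto ((1 : ℝ), α)).mono_left nhdsWithin_le_nhds
      convert h using 2
      field_simp
      ring
    · exact (hsqrt_lim ((1 : ℝ), α) (by ring)).inv_tendsto_nhdsGT_zero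
  · -- corner (-1, -β)
    rw [hFeq]
    apply Filter.Tendsto.pos_mul_atTop (show (0:ℝ) < 2 by norm_num)
    · have h : Filter.Tendsto (fun z : ℝ × ℝ => (2 / (α + β)) * (z.2 - (α - β) / 2) * z.1 + 1)
          (nhdsWithin ((-1 : ℝ), -β) (Set.Ioo (-1 : ℝ) 1 ×ˢ Set.Ioo (-β) α))
          (nhds ((2 / (α + β)) * (((-1 : ℝ), -β).2 - (α - β) / 2) * ((-1 : ℝ), -β).1 + 1)) :=
        (hnum_cont.tendsto ((-1 : ℝ), -β)).mono_left nhdsWithin_le_nhds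
      convert h using 2
      field_simp
      ring
    · exact (hsqrt_lim ((-1 : ℝ), -β) (by ring)).inv_tendsto_nhdsGT_zero
end

section
/- Let α, β > 0, let a(s), b(s) be as in the wristband example, ρ(y,s) = a(s)y + b(s) on G = (−1,1)×(−β,α), and let g(y) = α·1_{y=1} − β·1_{y=−1}. Then for every f ∈ C²(closure G) satisfying the oblique boundary inequality (g(y) − s)·∂_s f(y,s) ≥ sgn(y)·∂_y f(y,s) at y = ±1 for all s ∈ (−β,α), one has ∫_G ∂_{yy} f(y,s) ρ(y,s) dy ds ≤ 0. -/
open MeasureTheory Set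

namespace WeissWristband

noncomputable def wq (α β s : ℝ) : ℝ := Real.sqrt ((α - s) * (β + s))
noncomputable def wa (α β s : ℝ) : ℝ :=
  2 / (α + β) * (s - (α - β) / 2) / Real.sqrt ((α - s) * (β + s))
noncomputable def wb (α β s : ℝ) : ℝ := 1 / Real.sqrt ((α - s) * (β + s))

/-- The integrand of the Weiss inequality. -/
noncomputable def wF (f : ℝ × ℝ → ℝ) (α β : ℝ) (z : ℝ × ℝ) : ℝ :=
  (fderiv ℝ (fun w => fderiv ℝ f w ((1 : ℝ), (0 : ℝ))) z ((1 : ℝ), (0 : ℝ))) *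
    (wa α β z.2 * z.1 + wb α β z.2)

/-- The upper bound for the inner integral. -/
noncomputable def wD (f : ℝ × ℝ → ℝ) (α β s : ℝ) : ℝ :=
  2 / (α + β) * wq α β s *
      (fderiv ℝ f (1, s) ((0 : ℝ), (1 : ℝ)) - fderiv ℝ f (-1, s) ((0 : ℝ), (1 : ℝ))) -
    wa α β s * (f (1, s) - f (-1, s))

/-- The primitive of `wD`. -/
noncomputable def wG (f : ℝ × ℝ → ℝ) (α β s : ℝ) : ℝ :=
  2 / (α + β) * wq α β s * (f (1, s) - f (-1, s))

variable {α β s : ℝ}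

lemma wq_cont : Continuous (wq α β) :=
  ((continuous_const.sub continuous_id).mul (continuous_const.add continuous_id)).sqrt

lemma wq_pos (hs : s ∈ Ioo (-β) α) : 0 < wq α β s :=
  Real.sqrt_pos.mpr (mul_pos (by linarith [hs.2]) (by linarith [hs.1]))

lemma wq_sq (hs : s ∈ Ioo (-β) α) : wq α β s * wq α β s = (α - s) * (β + s) :=
  Real.mul_self_sqrt (le_of_lt (mul_pos (by linarith [hs.2]) (by linarith [hs.1])))

lemma wq_hasDerivAt (hs : s ∈ Ioo (-β) α) :
    HasDerivAt (wq α β) ((α - β - 2 * s) / (2 * wq α β s)) s := by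
  have h1 : HasDerivAt (fun t : ℝ => (α - t) * (β + t)) (α - β - 2 * s) s := by
    have := ((hasDerivAt_const s α).sub (hasDerivAt_id s)).mul
      ((hasDerivAt_const s β).add (hasDerivAt_id s))
    refine this.congr_deriv ?_
    simp only [Pi.add_apply, Pi.sub_apply, Pi.mul_apply, id]
    ring
  have hne : (α - s) * (β + s) ≠ 0 :=
    ne_of_gt (mul_pos (by linarith [hs.2]) (by linarith [hs.1]))
  have h2 := (Real.hasDerivAt_sqrt hne).comp s h1
  have : (Real.sqrt ∘ fun t : ℝ => (α - t) * (β + t)) = wq α β := rfl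
  rw [this] at h2
  refine h2.congr_deriv ?_
  rw [wq]
  field_simp

lemma wa_meas : Measurable (wa α β) := by
  unfold wa
  exact (measurable_const.mul (measurable_id.sub measurable_const)).div
    ((continuous_const.sub continuous_id).mul (continuous_const.add continuous_id)).sqrt.measurable

lemma wb_meas : Measurable (wb α β) := by
  unfold wb
  exact measurable_const.div
    ((continuous_const.sub continuous_id).mul (continuous_const.add continuous_id)).sqrt.measurable

lemma wa_abs_le (hαβ : 0 < α + β) (hs : s ∈ Ioo (-β) α) : |wa α β s| ≤ wb α β s := by
  have hq : (0:ℝ) < Real.sqrt ((α - s) * (β + s)) := wq_pos hs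
  rw [wa, wb, abs_div, abs_of_pos hq]
  have hcpos : (0:ℝ) < 2 / (α + β) := by positivity
  gcongr
  have habs : |s - (α - β) / 2| ≤ (α + β) / 2 :=
    abs_le.mpr ⟨by linarith [hs.1], by linarith [hs.2]⟩
  calc |2 / (α + β) * (s - (α - β) / 2)| = 2 / (α + β) * |s - (α - β) / 2| := by
        rw [abs_mul, abs_of_pos hcpos]
    _ ≤ 2 / (α + β) * ((α + β) / 2) := mul_le_mul_of_nonneg_left habs hcpos.le
    _ = 1 := by field_simp

lemma wab_top (hαβ : 0 < α + β) (hs : s ∈ Ioo (-β) α) :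
    (wa α β s + wb α β s) * (α - s) = 2 / (α + β) * wq α β s := by
  have hq : (0:ℝ) < Real.sqrt ((α - s) * (β + s)) := wq_pos hs
  have hsq := wq_sq hs
  rw [wq] at hsq
  have key : (2 / (α + β) * (s - (α - β) / 2) + 1) * (α - s) =
      2 / (α + β) * (Real.sqrt ((α - s) * (β + s)) * Real.sqrt ((α - s) * (β + s))) := by
    rw [hsq]
    field_simp
    ring
  rw [wa, wb, ← add_div, div_mul_eq_mul_div, key, wq]
  field_simp

lemma wab_bot (hαβ : 0 < α + β) (hs : s ∈ Ioo (-β) α) :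
    (wb α β s - wa α β s) * (β + s) = 2 / (α + β) * wq α β s := by
  have hq : (0:ℝ) < Real.sqrt ((α - s) * (β + s)) := wq_pos hs
  have hsq := wq_sq hs
  rw [wq] at hsq
  have key : (1 - 2 / (α + β) * (s - (α - β) / 2)) * (β + s) =
      2 / (α + β) * (Real.sqrt ((α - s) * (β + s)) * Real.sqrt ((α - s) * (β + s))) := by
    rw [hsq]
    field_simp
    ring
  rw [wa, wb, ← sub_div, div_mul_eq_mul_div, key, wq]
  field_simp

lemma wq_inv_integrable (hα : 0 < α) (hβ : 0 < β) :
    IntegrableOn (fun s => (wq α β s)⁻¹) (Ioo (-β) α) := by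
  have hmeas : Measurable fun s => (wq α β s)⁻¹ := wq_cont.measurable.inv
  set m : ℝ := (α - β) / 2 with hm
  have hm1 : -β < m := by rw [hm]; linarith
  have hm2 : m < α := by rw [hm]; linarith
  have half : (0:ℝ) < (α + β) / 2 := by linarith
  have hK : (0:ℝ) < Real.sqrt ((α + β) / 2) := Real.sqrt_pos.mpr half
  have hA : IntegrableOn (fun s => (wq α β s)⁻¹) (Ioc (-β) m) := by
    have h1 : IntervalIntegrable (fun x : ℝ => x ^ (-(1/2) : ℝ)) volume 0 (m + β) :=
      intervalIntegral.intervalIntegrable_rpow' (by norm_num)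
    have h2 := h1.comp_add_right β
    rw [zero_sub, add_sub_cancel_right] at h2
    have h3 : IntervalIntegrable (fun s : ℝ => (β + s) ^ (-(1/2) : ℝ)) volume (-β) m := by
      simpa [add_comm] using h2
    have hint : IntegrableOn
        (fun s : ℝ => (Real.sqrt ((α + β) / 2))⁻¹ * (β + s) ^ (-(1/2) : ℝ)) (Ioc (-β) m) :=
      ((intervalIntegrable_iff_integrableOn_Ioc_of_le hm1.le).mp h3).const_mul _
    refine Integrable.mono' hint hmeas.aestronglyMeasurable.restrict ?_
    filter_upwards [ae_restrict_mem measurableSet_Ioc] with s hs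
    have h1' : 0 < β + s := by linarith [hs.1]
    have h2' : (α + β) / 2 ≤ α - s := by have := hs.2; rw [hm] at this; linarith
    rw [Real.norm_eq_abs, abs_of_nonneg
      (show (0:ℝ) ≤ (wq α β s)⁻¹ from inv_nonneg.mpr (Real.sqrt_nonneg _))]
    have hq : Real.sqrt ((α + β) / 2) * Real.sqrt (β + s) ≤ wq α β s := by
      rw [wq, ← Real.sqrt_mul half.le]
      exact Real.sqrt_le_sqrt (by nlinarith)
    have hqpos : 0 < Real.sqrt ((α + β) / 2) * Real.sqrt (β + s) :=
      mul_pos hK (Real.sqrt_pos.mpr h1')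
    calc (wq α β s)⁻¹ ≤ (Real.sqrt ((α + β) / 2) * Real.sqrt (β + s))⁻¹ :=
          inv_anti₀ hqpos hq
      _ = (Real.sqrt ((α + β) / 2))⁻¹ * (β + s) ^ (-(1/2) : ℝ) := by
          rw [mul_inv, Real.rpow_neg h1'.le, ← Real.sqrt_eq_rpow]
  have hB : IntegrableOn (fun s => (wq α β s)⁻¹) (Ioo m α) := by
    have h1 : IntervalIntegrable (fun x : ℝ => x ^ (-(1/2) : ℝ)) volume 0 (α - m) :=
      intervalIntegral.intervalIntegrable_rpow' (by norm_num)
    have h2 := h1.comp_sub_left α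
    rw [sub_zero, sub_sub_cancel] at h2
    have h3 : IntervalIntegrable (fun s : ℝ => (α - s) ^ (-(1/2) : ℝ)) volume m α := h2.symm
    have hint : IntegrableOn
        (fun s : ℝ => (Real.sqrt ((α + β) / 2))⁻¹ * (α - s) ^ (-(1/2) : ℝ)) (Ioc m α) :=
      ((intervalIntegrable_iff_integrableOn_Ioc_of_le hm2.le).mp h3).const_mul _
    refine Integrable.mono' (hint.mono_set Set.Ioo_subset_Ioc_self)
      hmeas.aestronglyMeasurable.restrict ?_
    filter_upwards [ae_restrict_mem measurableSet_Ioo] with s hs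
    have h1' : 0 < α - s := by linarith [hs.2]
    have h2' : (α + β) / 2 ≤ β + s := by have := hs.1; rw [hm] at this; linarith
    rw [Real.norm_eq_abs, abs_of_nonneg
      (show (0:ℝ) ≤ (wq α β s)⁻¹ from inv_nonneg.mpr (Real.sqrt_nonneg _))]
    have hq : Real.sqrt (α - s) * Real.sqrt ((α + β) / 2) ≤ wq α β s := by
      rw [wq, ← Real.sqrt_mul h1'.le]
      exact Real.sqrt_le_sqrt (by nlinarith)
    have hqpos : 0 < Real.sqrt (α - s) * Real.sqrt ((α + β) / 2) :=
      mul_pos (Real.sqrt_pos.mpr h1') hK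
    calc (wq α β s)⁻¹ ≤ (Real.sqrt (α - s) * Real.sqrt ((α + β) / 2))⁻¹ :=
          inv_anti₀ hqpos hq
      _ = (Real.sqrt ((α + β) / 2))⁻¹ * (α - s) ^ (-(1/2) : ℝ) := by
          rw [mul_inv, Real.rpow_neg h1'.le, ← Real.sqrt_eq_rpow]
          ring
  refine (hA.union hB).mono_set ?_
  intro s hs
  by_cases h : s ≤ m
  · exact Or.inl ⟨hs.1, h⟩
  · exact Or.inr ⟨not_le.mp h, hs.2⟩

end WeissWristband

open WeissWristband

/-- Weiss's submartingale criterion verified for the wristband density (Prop. 4.2):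
for every `C²` function `f` satisfying the oblique boundary inequality
`(g(y) − s) ∂ₛf ≥ sgn(y) ∂_y f` at `y = ±1` (with `g(1) = α`, `g(−1) = −β`),
one has `∫_G ∂_{yy} f · ρ ≤ 0`, where `ρ(y,s) = a(s) y + b(s)`. -/
theorem weiss_inequality_wristband (α β : ℝ) (hα : 0 < α) (hβ : 0 < β)
    (f : ℝ × ℝ → ℝ) (hf : ContDiff ℝ 2 f)
    (hbdry_top : ∀ s ∈ Set.Ioo (-β) α,
      fderiv ℝ f (1, s) ((0 : ℝ), (1 : ℝ)) * (α - s) ≥ fderiv ℝ f (1, s) ((1 : ℝ), (0 : ℝ)))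
    (hbdry_bot : ∀ s ∈ Set.Ioo (-β) α,
      fderiv ℝ f (-1, s) ((0 : ℝ), (1 : ℝ)) * (-β - s) ≥
        -(fderiv ℝ f (-1, s) ((1 : ℝ), (0 : ℝ)))) :
    (∫ z in Set.Ioo (-1 : ℝ) 1 ×ˢ Set.Ioo (-β) α,
        (fderiv ℝ (fun w => fderiv ℝ f w ((1 : ℝ), (0 : ℝ))) z ((1 : ℝ), (0 : ℝ))) *
          ((2 / (α + β)) * (z.2 - (α - β) / 2) / Real.sqrt ((α - z.2) * (β + z.2)) * z.1 +
            1 / Real.sqrt ((α - z.2) * (β + z.2)))) ≤ 0 := by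
  have hαβ : (0:ℝ) < α + β := by linarith
  show (∫ z in Set.Ioo (-1 : ℝ) 1 ×ˢ Set.Ioo (-β) α, wF f α β z) ≤ 0
  -- smoothness facts
  have hf1 : ContDiff ℝ 1 (fderiv ℝ f) := hf.fderiv_right (m := 1) (by norm_num)
  have hfyC : ContDiff ℝ 1 (fun z => fderiv ℝ f z ((1 : ℝ), (0 : ℝ))) :=
    hf1.clm_apply contDiff_const
  have hfyyc : Continuous
      (fun z => fderiv ℝ (fun w => fderiv ℝ f w ((1 : ℝ), (0 : ℝ))) z ((1 : ℝ), (0 : ℝ))) :=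
    ((hfyC.fderiv_right (m := 0) (by norm_num)).clm_apply contDiff_const).continuous
  have hfsc : Continuous (fun z => fderiv ℝ f z ((0 : ℝ), (1 : ℝ))) :=
    (hf1.clm_apply contDiff_const).continuous
  have hfd : Differentiable ℝ f := hf.differentiable (by norm_num)
  have hfyd : Differentiable ℝ (fun z => fderiv ℝ f z ((1 : ℝ), (0 : ℝ))) :=
    hfyC.differentiable (by norm_num)
  -- horizontal curve derivatives
  have hcurve : ∀ (g : ℝ × ℝ → ℝ), Differentiable ℝ g → ∀ (y s : ℝ),
      HasDerivAt (fun t => g (t, s)) (fderiv ℝ g (y, s) ((1 : ℝ), (0 : ℝ))) y := by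
    intro g hg y s
    have h := (hg (y, s)).hasFDerivAt.comp_hasDerivAt y
      ((hasDerivAt_id y).prodMk (hasDerivAt_const y s))
    exact h
  have hcurveV : ∀ (g : ℝ × ℝ → ℝ), Differentiable ℝ g → ∀ (y s : ℝ),
      HasDerivAt (fun t => g (y, t)) (fderiv ℝ g (y, s) ((0 : ℝ), (1 : ℝ))) s := by
    intro g hg y s
    have h := (hg (y, s)).hasFDerivAt.comp_hasDerivAt s
      ((hasDerivAt_const s y).prodMk (hasDerivAt_id s))
    exact h
  -- the inner integral, computed by integration by parts
  have hinner : ∀ s ∈ Set.Ioo (-β) α, (∫ y in Set.Ioo (-1:ℝ) 1, wF f α β (y, s)) =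
      (wa α β s + wb α β s) * fderiv ℝ f (1, s) ((1 : ℝ), (0 : ℝ))
        - (wb α β s - wa α β s) * fderiv ℝ f (-1, s) ((1 : ℝ), (0 : ℝ))
        - wa α β s * (f (1, s) - f (-1, s)) := by
    intro s hs
    rw [← MeasureTheory.integral_Ioc_eq_integral_Ioo,
      ← intervalIntegral.integral_of_le (show (-1:ℝ) ≤ 1 by norm_num)]
    have hu : ∀ y ∈ Set.uIcc (-1:ℝ) 1,
        HasDerivAt (fun y => wa α β s * y + wb α β s) (wa α β s) y := by
      intro y _
      simpa using ((hasDerivAt_id y).const_mul (wa α β s)).add_const (wb α β s)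
    have hv : ∀ y ∈ Set.uIcc (-1:ℝ) 1,
        HasDerivAt (fun t => fderiv ℝ f (t, s) ((1 : ℝ), (0 : ℝ)))
          (fderiv ℝ (fun w => fderiv ℝ f w ((1 : ℝ), (0 : ℝ))) (y, s) ((1 : ℝ), (0 : ℝ))) y :=
      fun y _ => hcurve _ hfyd y s
    have hIBP := intervalIntegral.integral_mul_deriv_eq_deriv_mul hu hv
      intervalIntegrable_const
      ((hfyyc.comp (continuous_id.prodMk continuous_const)).intervalIntegrable _ _)
    have hFTC : (∫ y in (-1:ℝ)..1, fderiv ℝ f (y, s) ((1 : ℝ), (0 : ℝ)))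
        = f (1, s) - f (-1, s) :=
      intervalIntegral.integral_eq_sub_of_hasDerivAt (fun y _ => hcurve f hfd y s)
        ((hfyC.continuous.comp (continuous_id.prodMk continuous_const)).intervalIntegrable _ _)
    calc (∫ y in (-1:ℝ)..1, wF f α β (y, s))
        = ∫ y in (-1:ℝ)..1, (wa α β s * y + wb α β s) *
            (fderiv ℝ (fun w => fderiv ℝ f w ((1 : ℝ), (0 : ℝ))) (y, s) ((1 : ℝ), (0 : ℝ))) := by
          apply intervalIntegral.integral_congr
          intro y _
          simp only [wF]
          ring
      _ = (wa α β s * 1 + wb α β s) * fderiv ℝ f (1, s) ((1 : ℝ), (0 : ℝ))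
            - (wa α β s * (-1) + wb α β s) * fderiv ℝ f (-1, s) ((1 : ℝ), (0 : ℝ))
            - ∫ y in (-1:ℝ)..1, wa α β s * fderiv ℝ f (y, s) ((1 : ℝ), (0 : ℝ)) := hIBP
      _ = _ := by
          rw [intervalIntegral.integral_const_mul, hFTC]
          ring
  -- the pointwise bound on the inner integral
  have hbound : ∀ s ∈ Set.Ioo (-β) α,
      (∫ y in Set.Ioo (-1:ℝ) 1, wF f α β (y, s)) ≤ wD f α β s := by
    intro s hs
    rw [hinner s hs, wD]
    have habs := wa_abs_le hαβ hs
    have hnn1 : 0 ≤ wa α β s + wb α β s := by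
      have h1 := neg_abs_le (wa α β s); linarith
    have hnn2 : 0 ≤ wb α β s - wa α β s := by
      have h1 := le_abs_self (wa α β s); linarith
    have ht := hbdry_top s hs
    have hb := hbdry_bot s hs
    have e1 := wab_top hαβ hs
    have e2 := wab_bot hαβ hs
    have k1 : (wa α β s + wb α β s) * fderiv ℝ f (1, s) ((1 : ℝ), (0 : ℝ))
        ≤ 2 / (α + β) * wq α β s * fderiv ℝ f (1, s) ((0 : ℝ), (1 : ℝ)) := by
      calc (wa α β s + wb α β s) * fderiv ℝ f (1, s) ((1 : ℝ), (0 : ℝ))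
          ≤ (wa α β s + wb α β s) * (fderiv ℝ f (1, s) ((0 : ℝ), (1 : ℝ)) * (α - s)) :=
            mul_le_mul_of_nonneg_left ht hnn1
        _ = ((wa α β s + wb α β s) * (α - s)) * fderiv ℝ f (1, s) ((0 : ℝ), (1 : ℝ)) := by ring
        _ = _ := by rw [e1]
    have k2 : -((wb α β s - wa α β s) * fderiv ℝ f (-1, s) ((1 : ℝ), (0 : ℝ)))
        ≤ -(2 / (α + β) * wq α β s * fderiv ℝ f (-1, s) ((0 : ℝ), (1 : ℝ))) := by
      calc -((wb α β s - wa α β s) * fderiv ℝ f (-1, s) ((1 : ℝ), (0 : ℝ)))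
          = (wb α β s - wa α β s) * (-(fderiv ℝ f (-1, s) ((1 : ℝ), (0 : ℝ)))) := by ring
        _ ≤ (wb α β s - wa α β s) * (fderiv ℝ f (-1, s) ((0 : ℝ), (1 : ℝ)) * (-β - s)) :=
            mul_le_mul_of_nonneg_left hb hnn2
        _ = -(((wb α β s - wa α β s) * (β + s)) * fderiv ℝ f (-1, s) ((0 : ℝ), (1 : ℝ))) := by
            ring
        _ = _ := by rw [e2]
    linarith
  -- derivative of the primitive wG
  have hGd : ∀ s ∈ Set.Ioo (-β) α, HasDerivAt (wG f α β) (wD f α β s) s := by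
    intro s hs
    have hqpos := wq_pos hs
    have hq' := wq_hasDerivAt hs
    have hh : HasDerivAt (fun t => f (1, t) - f (-1, t))
        (fderiv ℝ f (1, s) ((0 : ℝ), (1 : ℝ)) - fderiv ℝ f (-1, s) ((0 : ℝ), (1 : ℝ))) s :=
      (hcurveV f hfd 1 s).sub (hcurveV f hfd (-1) s)
    have h2 : HasDerivAt (wG f α β)
        (2 / (α + β) * ((α - β - 2 * s) / (2 * wq α β s)) * (f (1, s) - f (-1, s))
          + 2 / (α + β) * wq α β s *
            (fderiv ℝ f (1, s) ((0 : ℝ), (1 : ℝ)) - fderiv ℝ f (-1, s) ((0 : ℝ), (1 : ℝ)))) s :=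
      (hq'.const_mul (2 / (α + β))).mul hh
    convert h2 using 1
    have hqne : wq α β s ≠ 0 := ne_of_gt hqpos
    rw [wD, wa]
    rw [show Real.sqrt ((α - s) * (β + s)) = wq α β s from rfl]
    field_simp
    ring
  have hGc : Continuous (wG f α β) := by
    unfold wG
    exact (continuous_const.mul wq_cont).mul
      ((hf.continuous.comp (continuous_const.prodMk continuous_id)).sub
        (hf.continuous.comp (continuous_const.prodMk continuous_id)))
  -- integrability of wD on I2
  have hhcont : Continuous (fun s : ℝ => f (1, s) - f (-1, s)) :=
    (hf.continuous.comp (continuous_const.prodMk continuous_id)).sub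
      (hf.continuous.comp (continuous_const.prodMk continuous_id))
  obtain ⟨Mh, hMh⟩ := (isCompact_Icc (a := -β) (b := α)).exists_bound_of_continuousOn
    hhcont.continuousOn
  have hD1int : IntegrableOn (fun s => 2 / (α + β) * wq α β s *
      (fderiv ℝ f (1, s) ((0 : ℝ), (1 : ℝ)) - fderiv ℝ f (-1, s) ((0 : ℝ), (1 : ℝ))))
      (Set.Ioo (-β) α) := by
    have hc : Continuous (fun s : ℝ => 2 / (α + β) * wq α β s *
        (fderiv ℝ f (1, s) ((0 : ℝ), (1 : ℝ)) - fderiv ℝ f (-1, s) ((0 : ℝ), (1 : ℝ)))) :=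
      (continuous_const.mul wq_cont).mul
        ((hfsc.comp (continuous_const.prodMk continuous_id)).sub
          (hfsc.comp (continuous_const.prodMk continuous_id)))
    exact (hc.integrableOn_Icc).mono_set Set.Ioo_subset_Icc_self
  have hD2int : IntegrableOn (fun s => wa α β s * (f (1, s) - f (-1, s)))
      (Set.Ioo (-β) α) := by
    refine Integrable.mono' ((wq_inv_integrable hα hβ).const_mul Mh) ?_ ?_
    · exact ((wa_meas.mul hhcont.measurable).aestronglyMeasurable).restrict
    · filter_upwards [ae_restrict_mem measurableSet_Ioo] with s hs
      rw [Real.norm_eq_abs, abs_mul]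
      have h1 := wa_abs_le hαβ hs
      have h2 : |f (1, s) - f (-1, s)| ≤ Mh := by
        have := hMh s ⟨hs.1.le, hs.2.le⟩
        simpa using this
      have hwb0 : 0 ≤ wb α β s := by rw [wb]; positivity
      calc |wa α β s| * |f (1, s) - f (-1, s)| ≤ wb α β s * Mh :=
            mul_le_mul h1 h2 (abs_nonneg _) hwb0
        _ = Mh * (wq α β s)⁻¹ := by
            rw [show (wq α β s)⁻¹ = wb α β s from by rw [wb, wq, one_div]]
            ring
  have hDint : IntegrableOn (wD f α β) (Set.Ioo (-β) α) := hD1int.sub hD2int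
  have hDiiv : IntervalIntegrable (wD f α β) volume (-β) α := by
    rw [intervalIntegrable_iff_integrableOn_Ioc_of_le (by linarith),
      integrableOn_Ioc_iff_integrableOn_Ioo]
    exact hDint
  have hzero : (∫ s in (-β)..α, wD f α β s) = 0 := by
    rw [intervalIntegral.integral_eq_sub_of_hasDerivAt_of_le (by linarith) hGc.continuousOn
      (fun s hs => hGd s hs) hDiiv]
    have g1 : wG f α β α = 0 := by
      unfold wG wq
      simp
    have g2 : wG f α β (-β) = 0 := by
      unfold wG wq
      simp
    rw [g1, g2, sub_zero]
  -- global integrability of wF on the product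
  obtain ⟨M, hM⟩ := ((isCompact_Icc (a := (-1:ℝ)) (b := 1)).prod
    (isCompact_Icc (a := -β) (b := α))).exists_bound_of_continuousOn hfyyc.continuousOn
  have hM0 : 0 ≤ M := le_trans (norm_nonneg _)
    (hM ((0:ℝ), (0:ℝ)) ⟨⟨by norm_num, by norm_num⟩, ⟨by exact neg_nonpos.mpr hβ.le, by exact hα.le⟩⟩)
  have hFmeas : AEStronglyMeasurable (wF f α β)
      ((volume.restrict (Set.Ioo (-1:ℝ) 1)).prod (volume.restrict (Set.Ioo (-β) α))) := by
    apply Measurable.aestronglyMeasurable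
    exact hfyyc.measurable.mul
      (((wa_meas.comp measurable_snd).mul measurable_fst).add (wb_meas.comp measurable_snd))
  have hg1int : Integrable (fun _ : ℝ => (1:ℝ)) (volume.restrict (Set.Ioo (-1:ℝ) 1)) :=
    integrableOn_const measure_Ioo_lt_top.ne
  have hg2int : Integrable (fun s => 2 * M * (wq α β s)⁻¹)
      (volume.restrict (Set.Ioo (-β) α)) := (wq_inv_integrable hα hβ).const_mul _
  have hFint : Integrable (wF f α β)
      ((volume.restrict (Set.Ioo (-1:ℝ) 1)).prod (volume.restrict (Set.Ioo (-β) α))) := by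
    refine Integrable.mono' (Integrable.mul_prod hg1int hg2int) hFmeas ?_
    have hae : ∀ᵐ z ∂((volume.restrict (Set.Ioo (-1:ℝ) 1)).prod
        (volume.restrict (Set.Ioo (-β) α))), z ∈ Set.Ioo (-1:ℝ) 1 ×ˢ Set.Ioo (-β) α := by
      rw [Measure.prod_restrict]
      exact ae_restrict_mem (measurableSet_Ioo.prod measurableSet_Ioo)
    filter_upwards [hae] with z hz
    obtain ⟨hz1, hz2⟩ := hz
    have hMz : ‖(fderiv ℝ (fun w => fderiv ℝ f w ((1 : ℝ), (0 : ℝ))) z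
        ((1 : ℝ), (0 : ℝ)))‖ ≤ M :=
      hM z ⟨⟨hz1.1.le, hz1.2.le⟩, ⟨hz2.1.le, hz2.2.le⟩⟩
    have hwa := wa_abs_le hαβ hz2
    have hwb0 : 0 ≤ wb α β z.2 := by rw [wb]; positivity
    have hz1abs : |z.1| ≤ 1 := abs_le.mpr ⟨hz1.1.le, hz1.2.le⟩
    have hwbq : wb α β z.2 = (wq α β z.2)⁻¹ := by rw [wb, wq, one_div]
    have hρ : |wa α β z.2 * z.1 + wb α β z.2| ≤ 2 * (wq α β z.2)⁻¹ := by
      have ha1 : |wa α β z.2 * z.1 + wb α β z.2| ≤ |wa α β z.2| * |z.1| + wb α β z.2 := by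
        refine (abs_add_le _ _).trans ?_
        rw [abs_mul, abs_of_nonneg hwb0]
      have ha2 : |wa α β z.2| * |z.1| ≤ wb α β z.2 :=
        le_trans (mul_le_of_le_one_right (abs_nonneg _) hz1abs) hwa
      rw [← hwbq]
      linarith
    calc ‖wF f α β z‖
        = ‖(fderiv ℝ (fun w => fderiv ℝ f w ((1 : ℝ), (0 : ℝ))) z ((1 : ℝ), (0 : ℝ)))‖ *
            |wa α β z.2 * z.1 + wb α β z.2| := by
          rw [show wF f α β z = (fderiv ℝ (fun w => fderiv ℝ f w ((1 : ℝ), (0 : ℝ))) z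
            ((1 : ℝ), (0 : ℝ))) * (wa α β z.2 * z.1 + wb α β z.2) from rfl, norm_mul,
            Real.norm_eq_abs (wa α β z.2 * z.1 + wb α β z.2)]
      _ ≤ M * (2 * (wq α β z.2)⁻¹) :=
          mul_le_mul hMz hρ (abs_nonneg _) hM0
      _ = (fun _ : ℝ => (1:ℝ)) z.1 * (2 * M * (wq α β z.2)⁻¹) := by ring
  -- Fubini
  have key : (∫ z in Set.Ioo (-1 : ℝ) 1 ×ˢ Set.Ioo (-β) α, wF f α β z)
      = ∫ s, (∫ y, wF f α β (y, s) ∂(volume.restrict (Set.Ioo (-1:ℝ) 1)))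
          ∂(volume.restrict (Set.Ioo (-β) α)) := by
    rw [Measure.volume_eq_prod, ← Measure.prod_restrict]
    exact integral_prod_symm _ hFint
  have hinner_int : Integrable
      (fun s => ∫ y, wF f α β (y, s) ∂(volume.restrict (Set.Ioo (-1:ℝ) 1)))
      (volume.restrict (Set.Ioo (-β) α)) := hFint.integral_prod_right
  have hmono : (∫ s, (∫ y, wF f α β (y, s) ∂(volume.restrict (Set.Ioo (-1:ℝ) 1)))
      ∂(volume.restrict (Set.Ioo (-β) α))) ≤ ∫ s in Set.Ioo (-β) α, wD f α β s :=
    setIntegral_mono_on hinner_int hDint measurableSet_Ioo (fun s hs => hbound s hs)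
  have hfin : (∫ s in Set.Ioo (-β) α, wD f α β s) = 0 := by
    rw [← MeasureTheory.integral_Ioc_eq_integral_Ioo,
      ← intervalIntegral.integral_of_le (show -β ≤ α by linarith)]
    exact hzero
  rw [key]
  rw [hfin] at hmono
  exact hmono
end
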